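/- arXiv:1707.03653 — 6 statements merged into one kernel-verified Lean document; each statement's English description precedes it below -/
import Mathlib

section
/- Let d ≥ 1, p ≥ 1, κ ≥ d, and let f : ℝ^d → ℂ be continuously differentiable with f ∈ L^p(ℝ^d) and ‖∇f‖_{A^{κ,p}} < ∞. Then ‖f‖_{A^{κ+p,p}} ≤ ‖f‖_{L^p} + ‖∇f‖_{A^{κ,p}}; in particular f ∈ A^{κ+p,p}. -/
open MeasureTheory
open scoped ENNReal NNReal

/-- `ℝ^d` as a Euclidean space. -/
abbrev E (d : ℕ) : Type := EuclideanSpace ℝ (Fin d)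

/-- The `A^{κ,p}` norm: `sup_{R ≥ 0} (1+R)^{-κ/p} (∫ sup_{|z̄| ≤ R} ‖f(z+z̄)‖^p dz)^{1/p}`. -/
noncomputable def Anorm {G F : Type*} [NormedAddCommGroup G] [MeasureSpace G]
    [NormedAddCommGroup F] (κ p : ℝ) (f : G → F) : ℝ≥0∞ :=
  ⨆ R : NNReal, (ENNReal.ofReal (1 + (R : ℝ))) ^ (-(κ / p)) *
    (∫⁻ z, ⨆ w ∈ Metric.closedBall (0 : G) (R : ℝ),
      ENNReal.ofReal (‖f (z + w)‖ ^ p)) ^ (1 / p)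

lemma aux_sup_rpow {G F' : Type*} [NormedAddCommGroup G] [NormedAddCommGroup F']
    {p : ℝ} (hp : 0 < p) (φ : G → F') (R : ℝ) (z : G) :
    ⨆ w ∈ Metric.closedBall (0 : G) R, ENNReal.ofReal (‖φ (z + w)‖ ^ p)
      = (⨆ w ∈ Metric.closedBall (0 : G) R, (‖φ (z + w)‖₊ : ℝ≥0∞)) ^ p := by
  have h1 : ∀ x : ℝ≥0∞, ENNReal.orderIsoRpow p hp x = x ^ p := fun _ => rfl
  rw [← h1, OrderIso.map_iSup]
  refine iSup_congr fun w => ?_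
  rw [OrderIso.map_iSup]
  refine iSup_congr fun hw => ?_
  rw [h1, ← enorm_eq_nnnorm, ← ofReal_norm, ENNReal.ofReal_rpow_of_nonneg (norm_nonneg _) hp.le]

lemma aux_meas {G F' : Type*} [NormedAddCommGroup G] [MeasurableSpace G] [OpensMeasurableSpace G]
    [NormedAddCommGroup F'] {φ : G → F'} (hφ : Continuous φ) (R : ℝ) :
    Measurable (fun z => ⨆ w ∈ Metric.closedBall (0 : G) R, (‖φ (z + w)‖₊ : ℝ≥0∞)) := by
  apply LowerSemicontinuous.measurable
  apply lowerSemicontinuous_iSup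
  intro w
  apply lowerSemicontinuous_iSup
  intro _
  exact ((ENNReal.continuous_coe.comp (continuous_nnnorm.comp
    (hφ.comp (continuous_id.add continuous_const))))).lowerSemicontinuous

set_option maxHeartbeats 1000000 in
/-- If `f ∈ L^p` and `‖∇f‖_{A^{κ,p}} < ∞`, then
`‖f‖_{A^{κ+p,p}} ≤ ‖f‖_{L^p} + ‖∇f‖_{A^{κ,p}}`; in particular `f ∈ A^{κ+p,p}`. -/
theorem statement3 (d : ℕ) (hd : 1 ≤ d) (p κ : ℝ) (hp : 1 ≤ p) (hκ : (d : ℝ) ≤ κ)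
    (f : E d → ℂ) (hf : ContDiff ℝ 1 f)
    (hLp : MemLp f (ENNReal.ofReal p) volume)
    (hgrad : Anorm κ p (fderiv ℝ f) < ⊤) :
    Anorm (κ + p) p f ≤ eLpNorm f (ENNReal.ofReal p) volume + Anorm κ p (fderiv ℝ f) ∧
      Anorm (κ + p) p f < ⊤ := by
  have hp0 : (0:ℝ) < p := lt_of_lt_of_le one_pos hp
  have hκ1 : (1:ℝ) ≤ κ := le_trans (by exact_mod_cast hd) hκ
  have hκ0 : (0:ℝ) < κ := lt_of_lt_of_le one_pos hκ1
  set F := fderiv ℝ f with hFdef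
  have hfc : Continuous f := hf.continuous
  have hFc : Continuous F := hf.continuous_fderiv one_ne_zero
  set A := Anorm κ p F with hA
  set N := eLpNorm f (ENNReal.ofReal p) volume with hN
  have hNeq : N = (∫⁻ z, (‖f z‖₊ : ℝ≥0∞) ^ p) ^ (1/p) := by
    rw [hN, eLpNorm_eq_lintegral_rpow_enorm_toReal (by simp [ENNReal.ofReal_eq_zero]; linarith)
      ENNReal.ofReal_ne_top, ENNReal.toReal_ofReal hp0.le]
    rfl
  have key : ∀ R : ℝ≥0,
      (ENNReal.ofReal (1 + (R:ℝ))) ^ (-((κ+p)/p)) *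
      (∫⁻ z, ⨆ w ∈ Metric.closedBall (0 : E d) (R:ℝ),
        ENNReal.ofReal (‖f (z+w)‖ ^ p)) ^ (1/p) ≤ N + A := by
    intro R
    set c := ENNReal.ofReal (1 + (R:ℝ)) with hc
    set B := Metric.closedBall (0 : E d) (R:ℝ) with hB
    set Sf := fun z => ⨆ w ∈ B, (‖f (z+w)‖₊ : ℝ≥0∞) with hSf
    set SF := fun z => ⨆ w ∈ B, (‖F (z+w)‖₊ : ℝ≥0∞) with hSF
    have hc1 : 1 ≤ c := ENNReal.one_le_ofReal.2 (by linarith [R.coe_nonneg])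
    have hc0 : c ≠ 0 := (zero_lt_one.trans_le hc1).ne'
    have hctop : c ≠ ⊤ := ENNReal.ofReal_ne_top
    have hRc : (R:ℝ≥0∞) ≤ c := by
      rw [hc, ← ENNReal.ofReal_coe_nnreal]
      exact ENNReal.ofReal_le_ofReal (by linarith)
    -- pointwise bound
    have hpt : ∀ z, Sf z ≤ (‖f z‖₊ : ℝ≥0∞) + (R : ℝ≥0∞) * SF z := by
      intro z
      refine iSup₂_le fun w hw => ?_
      obtain ⟨w₀, hw₀B, hmax⟩ := (isCompact_closedBall (0 : E d) (R:ℝ)).exists_isMaxOn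
        ⟨0, Metric.mem_closedBall_self R.coe_nonneg⟩
        (Continuous.continuousOn (f := fun w' : E d => ‖F (z + w')‖) (by fun_prop))
      have h2 : ∀ x ∈ Metric.closedBall (0 : E d) (R:ℝ),
          ‖F (z + x)‖ ≤ ‖F (z + w₀)‖ := fun x hx => isMaxOn_iff.1 hmax x hx
      have hC : ∀ x ∈ Metric.closedBall z (R:ℝ), ‖fderiv ℝ f x‖ ≤ ‖F (z + w₀)‖ := by
        intro x hx
        have hx' : x - z ∈ Metric.closedBall (0 : E d) (R:ℝ) := by
          simpa [Metric.mem_closedBall, dist_eq_norm] using hx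
        have h3 := h2 _ hx'
        rwa [show z + (x - z) = x by abel] at h3
      have hseg : ‖f (z + w) - f z‖ ≤ ‖F (z + w₀)‖ * ‖(z + w) - z‖ := by
        refine (convex_closedBall z (R:ℝ)).norm_image_sub_le_of_norm_fderiv_le
          (fun x _ => (hf.differentiable one_ne_zero).differentiableAt) hC
          (Metric.mem_closedBall_self R.coe_nonneg) ?_
        simpa [hB, Metric.mem_closedBall, dist_eq_norm, add_sub_cancel_left] using hw
      have hwR : ‖(z + w) - z‖ ≤ (R:ℝ) := by
        simpa [hB, Metric.mem_closedBall, dist_eq_norm, add_sub_cancel_left] using hw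
      have hCnn : (0:ℝ) ≤ ‖F (z + w₀)‖ := norm_nonneg _
      have h1 : ‖f (z + w)‖ ≤ ‖f z‖ + (R:ℝ) * ‖F (z + w₀)‖ := by
        have h2 : ‖f (z + w)‖ ≤ ‖f z‖ + ‖f (z + w) - f z‖ := norm_le_norm_add_norm_sub' _ _
        nlinarith [hseg, hwR]
      calc (‖f (z+w)‖₊ : ℝ≥0∞) = ENNReal.ofReal ‖f (z+w)‖ := (ofReal_norm _).symm
        _ ≤ ENNReal.ofReal (‖f z‖ + (R:ℝ) * ‖F (z + w₀)‖) := ENNReal.ofReal_le_ofReal h1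
        _ = ENNReal.ofReal ‖f z‖ + ENNReal.ofReal ((R:ℝ) * ‖F (z + w₀)‖) :=
            ENNReal.ofReal_add (norm_nonneg _) (by positivity)
        _ = (‖f z‖₊ : ℝ≥0∞) + (R:ℝ≥0∞) * (‖F (z + w₀)‖₊ : ℝ≥0∞) := by
            rw [ofReal_norm, ENNReal.ofReal_mul R.coe_nonneg, ENNReal.ofReal_coe_nnreal,
              ofReal_norm]
            rfl
        _ ≤ (‖f z‖₊ : ℝ≥0∞) + (R:ℝ≥0∞) * SF z := by
            gcongr
            exact le_iSup₂ (f := fun w (_ : w ∈ B) => ((‖F (z+w)‖₊ : ℝ≥0∞))) w₀ hw₀B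
    have hmSF : Measurable SF := aux_meas hFc (R:ℝ)
    have hmes1 : Measurable fun z => (‖f z‖₊ : ℝ≥0∞) := hfc.measurable.enorm
    have mink := ENNReal.lintegral_Lp_add_le (μ := volume) hmes1.aemeasurable
      ((hmSF.const_mul ((R:ℝ≥0∞))).aemeasurable) hp
    have step1 : (∫⁻ z, Sf z ^ p) ^ (1/p) ≤ N + (R:ℝ≥0∞) * (∫⁻ z, SF z ^ p) ^ (1/p) := by
      calc (∫⁻ z, Sf z ^ p) ^ (1/p)
          ≤ (∫⁻ z, ((‖f z‖₊:ℝ≥0∞) + (R:ℝ≥0∞) * SF z) ^ p) ^ (1/p) := by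
            gcongr with z
            exact hpt z
        _ ≤ (∫⁻ z, (‖f z‖₊:ℝ≥0∞) ^ p) ^ (1/p)
            + (∫⁻ z, ((R:ℝ≥0∞) * SF z) ^ p) ^ (1/p) := mink
        _ = N + (R:ℝ≥0∞) * (∫⁻ z, SF z ^ p) ^ (1/p) := by
            rw [hNeq]
            congr 1
            simp only [ENNReal.mul_rpow_of_nonneg _ _ hp0.le]
            rw [lintegral_const_mul _ (hmSF.pow_const p),
              ENNReal.mul_rpow_of_nonneg _ _ (by positivity : (0:ℝ) ≤ 1/p),
              ← ENNReal.rpow_mul, mul_one_div_cancel hp0.ne', ENNReal.rpow_one]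
    have hAR : (∫⁻ z, SF z ^ p) ^ (1/p) ≤ c ^ (κ/p) * A := by
      have h1 : c ^ (-(κ/p)) * (∫⁻ z, SF z ^ p) ^ (1/p) ≤ A := by
        rw [hA]
        unfold Anorm
        refine le_trans (le_of_eq ?_) (le_iSup _ R)
        simp only [aux_sup_rpow hp0]
        rfl
      calc (∫⁻ z, SF z ^ p) ^ (1/p)
          = c ^ (κ/p) * (c ^ (-(κ/p)) * (∫⁻ z, SF z ^ p) ^ (1/p)) := by
            rw [← mul_assoc, ← ENNReal.rpow_add _ _ hc0 hctop, add_neg_cancel,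
              ENNReal.rpow_zero, one_mul]
        _ ≤ c ^ (κ/p) * A := mul_le_mul_right h1 _
    have step2 : (∫⁻ z, Sf z ^ p) ^ (1/p) ≤ N + (R:ℝ≥0∞) * (c ^ (κ/p) * A) :=
      step1.trans (by gcongr)
    have hsup_eq : (∫⁻ z, ⨆ w ∈ B, ENNReal.ofReal (‖f (z+w)‖ ^ p)) = ∫⁻ z, Sf z ^ p := by
      simp only [aux_sup_rpow hp0, hSf, hB]
    rw [hsup_eq]
    have hle1 : c ^ (-((κ+p)/p)) ≤ 1 := by
      rw [ENNReal.rpow_neg]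
      exact ENNReal.inv_le_one.2 (ENNReal.one_le_rpow hc1 (by positivity))
    calc c ^ (-((κ+p)/p)) * (∫⁻ z, Sf z ^ p) ^ (1/p)
        ≤ c ^ (-((κ+p)/p)) * (N + (R:ℝ≥0∞) * (c ^ (κ/p) * A)) := mul_le_mul_right step2 _
      _ = c ^ (-((κ+p)/p)) * N + ((R:ℝ≥0∞) * (c ^ (-((κ+p)/p)) * c ^ (κ/p))) * A := by ring
      _ ≤ 1 * N + 1 * A := by
          gcongr
          rw [← ENNReal.rpow_add _ _ hc0 hctop]
          have he : (-((κ+p)/p) + κ/p) = -1 := by field_simp; ring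
          rw [he, ENNReal.rpow_neg_one]
          calc (R:ℝ≥0∞) * c⁻¹ ≤ c * c⁻¹ := mul_le_mul_left hRc _
            _ = 1 := ENNReal.mul_inv_cancel hc0 hctop
      _ = N + A := by rw [one_mul, one_mul]
  have hmain : Anorm (κ + p) p f ≤ N + A := iSup_le key
  exact ⟨hmain, lt_of_le_of_lt hmain (ENNReal.add_lt_top.2 ⟨hLp.2, hgrad⟩)⟩
end

section
/- Let d ≥ 1, κ ≥ d, λ ≥ d, and let p, q > 1 with 1/p + 1/q = 1. For all measurable functions f, g : ℝ^d → ℂ the generalized Hölder inequality ‖f·g‖_{A^{κ/p+λ/q,1}} ≤ ‖f‖_{A^{κ,p}} · ‖g‖_{A^{λ,q}} holds. -/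
open MeasureTheory
open scoped ENNReal NNReal

/-- The sup of translates over an open ball is lower semicontinuous. -/
lemma lsc_ball_sup {G : Type*} [NormedAddCommGroup G] (R : ℝ) (F : G → ℝ≥0∞) :
    LowerSemicontinuous fun z => ⨆ w ∈ Metric.ball (0 : G) R, F (z + w) := by
  intro z y hy
  change y < ⨆ w ∈ Metric.ball (0 : G) R, F (z + w) at hy
  rw [lt_iSup_iff] at hy
  obtain ⟨w, hw⟩ := hy
  rw [lt_iSup_iff] at hw
  obtain ⟨hwR, hyF⟩ := hw
  have hwn : ‖w‖ < R := by simpa [Metric.mem_ball, dist_zero_right] using hwR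
  filter_upwards [Metric.ball_mem_nhds z (sub_pos.2 hwn)] with z' hz'
  have hmem : w + (z - z') ∈ Metric.ball (0 : G) R := by
    rw [Metric.mem_ball, dist_zero_right]
    calc ‖w + (z - z')‖ ≤ ‖w‖ + ‖z - z'‖ := norm_add_le _ _
      _ < ‖w‖ + (R - ‖w‖) := by
          have h1 : dist z' z < R - ‖w‖ := by simpa [Metric.mem_ball] using hz'
          have h2 : ‖z - z'‖ = dist z' z := by rw [dist_comm, dist_eq_norm]
          linarith
      _ = R := by ring
  refine lt_of_lt_of_le hyF ?_
  refine le_trans (le_of_eq ?_) (le_iSup₂ (f := fun w _ => F (z' + w)) (w + (z - z')) hmem)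
  congr 1
  abel

/-- Positive real powers commute with (bounded) suprema in `ℝ≥0∞`. -/
lemma biSup_rpow {ι : Type*} (s : Set ι) (f : ι → ℝ≥0∞) {p : ℝ} (hp : 0 < p) :
    (⨆ w ∈ s, f w) ^ p = ⨆ w ∈ s, f w ^ p := by
  simp only [← ENNReal.orderIsoRpow_apply p hp, map_iSup]

/-- Generalized Hölder inequality for the `A^{κ,p}` norms:
`‖f·g‖_{A^{κ/p+λ/q,1}} ≤ ‖f‖_{A^{κ,p}} ‖g‖_{A^{λ,q}}` for conjugate exponents `p, q`. -/
theorem statement5 (d : ℕ) (hd : 1 ≤ d) (κ lam p q : ℝ)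
    (hκ : (d : ℝ) ≤ κ) (hlam : (d : ℝ) ≤ lam)
    (hp : 1 < p) (hq : 1 < q) (hpq : 1 / p + 1 / q = 1)
    (f g : E d → ℂ) (hf : Measurable f) (hg : Measurable g) :
    Anorm (κ / p + lam / q) 1 (f * g) ≤ Anorm κ p f * Anorm lam q g := by
  have hp0 : 0 < p := lt_trans one_pos hp
  have hq0 : 0 < q := lt_trans one_pos hq
  have hpq' : Real.HolderConjugate p q := Real.holderConjugate_iff.mpr ⟨hp, by rw [← one_div, ← one_div]; exact hpq⟩
  have hd1 : (1 : ℝ) ≤ (d : ℝ) := by exact_mod_cast hd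
  have hκ1 : (1 : ℝ) ≤ κ := hd1.trans hκ
  have hlam1 : (1 : ℝ) ≤ lam := hd1.trans hlam
  set s : ℝ := κ / p + lam / q with hs
  have hs0 : 0 < s := add_pos (div_pos (by linarith) hp0) (div_pos (by linarith) hq0)
  rw [Anorm]
  refine iSup_le fun R => ?_
  refine ENNReal.le_of_forall_lt_one_mul_le fun a ha => ?_
  rcases eq_or_ne a 0 with rfl | ha0
  · simp
  have haT : a ≠ ⊤ := ha.ne_top
  set α := a.toReal with hαdef
  have hα0 : 0 < α := ENNReal.toReal_pos ha0 haT
  have hα1 : α < 1 := by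
    have h' : a < ENNReal.ofReal 1 := by simpa using ha
    rw [ENNReal.lt_ofReal_iff_toReal_lt haT] at h'
    exact h'
  set t : ℝ := α ^ (-s⁻¹) with htdef
  have ht0 : 0 < t := Real.rpow_pos_of_pos hα0 _
  have ht1 : 1 < t :=
    (Real.one_lt_rpow_iff_of_pos hα0).2 (Or.inr ⟨hα1, by simp [hs0, inv_pos.2 hs0]⟩)
  have hR0 : (0 : ℝ) ≤ (R : ℝ) := R.coe_nonneg
  set R' : ℝ := (1 + (R : ℝ)) * t - 1 with hR'def
  have hRR' : (R : ℝ) < R' := by nlinarith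
  have hR'0 : 0 ≤ R' := hR0.trans hRR'.le
  have h1R' : 1 + R' = (1 + (R : ℝ)) * t := by ring
  set Ff : E d → ℝ≥0∞ := fun z => ENNReal.ofReal ‖f z‖ with hFf
  set Fg : E d → ℝ≥0∞ := fun z => ENNReal.ofReal ‖g z‖ with hFg
  set Sf : E d → ℝ≥0∞ := fun z => ⨆ w ∈ Metric.ball (0 : E d) R', Ff (z + w) with hSfdef
  set Sg : E d → ℝ≥0∞ := fun z => ⨆ w ∈ Metric.ball (0 : E d) R', Fg (z + w) with hSgdef
  have hSf : Measurable Sf := (lsc_ball_sup R' Ff).measurable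
  have hSg : Measurable Sg := (lsc_ball_sup R' Fg).measurable
  -- pointwise bound for the product
  have hpt : ∀ z, (⨆ w ∈ Metric.closedBall (0 : E d) (R : ℝ),
      ENNReal.ofReal (‖(f * g) (z + w)‖ ^ (1 : ℝ))) ≤ Sf z * Sg z := by
    intro z
    refine iSup₂_le fun w hw => ?_
    have hw' : w ∈ Metric.ball (0 : E d) R' := Metric.closedBall_subset_ball hRR' hw
    have heq : ENNReal.ofReal (‖(f * g) (z + w)‖ ^ (1 : ℝ)) = Ff (z + w) * Fg (z + w) := by
      show ENNReal.ofReal (‖(f * g) (z + w)‖ ^ (1 : ℝ)) =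
        ENNReal.ofReal ‖f (z + w)‖ * ENNReal.ofReal ‖g (z + w)‖
      rw [Real.rpow_one, Pi.mul_apply, norm_mul, ENNReal.ofReal_mul (norm_nonneg _)]
    rw [heq]
    exact mul_le_mul' (le_iSup₂ (f := fun w _ => Ff (z + w)) w hw')
      (le_iSup₂ (f := fun w _ => Fg (z + w)) w hw')
  -- Hölder
  have hhold : (∫⁻ z, ⨆ w ∈ Metric.closedBall (0 : E d) (R : ℝ),
      ENNReal.ofReal (‖(f * g) (z + w)‖ ^ (1 : ℝ))) ≤
      (∫⁻ z, Sf z ^ p) ^ (1 / p) * (∫⁻ z, Sg z ^ q) ^ (1 / q) := by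
    refine le_trans (lintegral_mono hpt) ?_
    exact ENNReal.lintegral_mul_le_Lp_mul_Lq volume hpq' hSf.aemeasurable hSg.aemeasurable
  -- compare the Lp factors with the closed-ball versions
  have hcoe : ((R'.toNNReal : ℝ)) = R' := Real.coe_toNNReal _ hR'0
  set X : ℝ≥0∞ := (∫⁻ z, ⨆ w ∈ Metric.closedBall (0 : E d) R',
      ENNReal.ofReal (‖f (z + w)‖ ^ p)) ^ (1 / p) with hXdef
  set Y : ℝ≥0∞ := (∫⁻ z, ⨆ w ∈ Metric.closedBall (0 : E d) R',
      ENNReal.ofReal (‖g (z + w)‖ ^ q)) ^ (1 / q) with hYdef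
  have hSfX : (∫⁻ z, Sf z ^ p) ^ (1 / p) ≤ X := by
    refine ENNReal.rpow_le_rpow (lintegral_mono fun z => ?_) (by positivity)
    rw [hSfdef]
    rw [biSup_rpow _ _ hp0]
    refine iSup₂_le fun w hw => ?_
    rw [hFf, ENNReal.ofReal_rpow_of_nonneg (norm_nonneg _) hp0.le]
    exact le_iSup₂ (f := fun w _ => ENNReal.ofReal (‖f (z + w)‖ ^ p)) w
      (Metric.ball_subset_closedBall hw)
  have hSgY : (∫⁻ z, Sg z ^ q) ^ (1 / q) ≤ Y := by
    refine ENNReal.rpow_le_rpow (lintegral_mono fun z => ?_) (by positivity)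
    rw [hSgdef]
    rw [biSup_rpow _ _ hq0]
    refine iSup₂_le fun w hw => ?_
    rw [hFg, ENNReal.ofReal_rpow_of_nonneg (norm_nonneg _) hq0.le]
    exact le_iSup₂ (f := fun w _ => ENNReal.ofReal (‖g (z + w)‖ ^ q)) w
      (Metric.ball_subset_closedBall hw)
  -- the weights
  set A : ℝ≥0∞ := ENNReal.ofReal (1 + (R : ℝ)) with hAdef
  set A' : ℝ≥0∞ := ENNReal.ofReal (1 + R') with hA'def
  have hA'0 : A' ≠ 0 := by
    rw [hA'def]
    simp only [ne_eq, ENNReal.ofReal_eq_zero, not_le]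
    linarith
  have hA'T : A' ≠ ⊤ := ENNReal.ofReal_ne_top
  have hXA : A' ^ (-(κ / p)) * X ≤ Anorm κ p f := by
    rw [Anorm]
    have h := le_iSup (fun RR : NNReal => (ENNReal.ofReal (1 + (RR : ℝ))) ^ (-(κ / p)) *
      (∫⁻ z, ⨆ w ∈ Metric.closedBall (0 : E d) (RR : ℝ),
        ENNReal.ofReal (‖f (z + w)‖ ^ p)) ^ (1 / p)) R'.toNNReal
    simpa [hcoe, hA'def, hXdef] using h
  have hYA : A' ^ (-(lam / q)) * Y ≤ Anorm lam q g := by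
    rw [Anorm]
    have h := le_iSup (fun RR : NNReal => (ENNReal.ofReal (1 + (RR : ℝ))) ^ (-(lam / q)) *
      (∫⁻ z, ⨆ w ∈ Metric.closedBall (0 : E d) (RR : ℝ),
        ENNReal.ofReal (‖g (z + w)‖ ^ q)) ^ (1 / q)) R'.toNNReal
    simpa [hcoe, hA'def, hYdef] using h
  -- key identity : a * A ^ (-s) = A' ^ (-s)
  have hAa : a * A ^ (-s) = A' ^ (-s) := by
    have hA'eq : A' = A * ENNReal.ofReal t := by
      rw [hA'def, hAdef, ← ENNReal.ofReal_mul (by linarith : (0:ℝ) ≤ 1 + (R:ℝ)), h1R']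
    have htns : t ^ (-s) = α := by
      rw [htdef, ← Real.rpow_mul hα0.le]
      rw [show -s⁻¹ * -s = 1 by field_simp]
      exact Real.rpow_one α
    rw [hA'eq, ENNReal.mul_rpow_of_ne_top ENNReal.ofReal_ne_top ENNReal.ofReal_ne_top,
      ENNReal.ofReal_rpow_of_pos ht0, htns, hαdef, ENNReal.ofReal_toReal haT, mul_comm]
  -- split the weight
  have hsplit : A' ^ (-s) = A' ^ (-(κ / p)) * A' ^ (-(lam / q)) := by
    rw [hs, neg_add, ENNReal.rpow_add _ _ hA'0 hA'T]
  calc a * ((ENNReal.ofReal (1 + (R : ℝ))) ^ (-((κ / p + lam / q) / 1)) *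
        (∫⁻ z, ⨆ w ∈ Metric.closedBall (0 : E d) (R : ℝ),
          ENNReal.ofReal (‖(f * g) (z + w)‖ ^ (1 : ℝ))) ^ (1 / (1:ℝ)))
      ≤ a * (A ^ (-s) * (X * Y)) := by
        rw [div_one, one_div_one, ENNReal.rpow_one]
        exact mul_le_mul' le_rfl (mul_le_mul' le_rfl (hhold.trans (mul_le_mul' hSfX hSgY)))
    _ = (A' ^ (-(κ / p)) * X) * (A' ^ (-(lam / q)) * Y) := by
        rw [← mul_assoc, hAa, hsplit]
        ring
    _ ≤ Anorm κ p f * Anorm lam q g := mul_le_mul' hXA hYA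
end

section
/- Let d ≥ 1, k ∈ ℕ, p ≥ 1, κ ≥ d. For every f ∈ B^{k,κ,p}(ℝ^d) and every ε > 0 there exists a C^k function g : ℝ^d → ℂ with compact support such that ‖f − g‖_{B^{k,κ,p}} ≤ ε. In other words, the compactly supported C^k functions are dense in B^{k,κ,p}. -/
open MeasureTheory
open scoped ENNReal NNReal

lemma aux_meas_s6 {d : ℕ} (u : E d → ℝ≥0∞) (hu : Continuous u) (r : ℝ) :
    Measurable (fun z : E d => ⨆ w ∈ Metric.closedBall (0 : E d) r, u (z + w)) := by
  apply LowerSemicontinuous.measurable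
  exact lowerSemicontinuous_biSup fun w _ =>
    (hu.comp (continuous_id.add continuous_const)).lowerSemicontinuous

/-- Key covering-by-averaging bound. -/
lemma aux_key {d : ℕ} (u : E d → ℝ≥0∞) (hu : Continuous u) {R : ℝ} (hR : 0 ≤ R) :
    (∫⁻ z, ⨆ w ∈ Metric.closedBall (0 : E d) R, u (z + w)) ≤
      ENNReal.ofReal ((R + 1) ^ d) *
        ∫⁻ z, ⨆ w ∈ Metric.closedBall (0 : E d) 1, u (z + w) := by
  classical
  set M : E d → ℝ≥0∞ := fun z => ⨆ w ∈ Metric.closedBall (0 : E d) 1, u (z + w) with hM_def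
  have hM : Measurable M := aux_meas_s6 u hu 1
  set c : ℝ≥0∞ := volume (Metric.closedBall (0 : E d) 1) with hc_def
  have hc0 : c ≠ 0 := by
    exact (Metric.measure_closedBall_pos volume (0 : E d) one_pos).ne'
  have hct : c ≠ ⊤ := measure_closedBall_lt_top.ne
  -- volume of translated unit ball
  have hball : ∀ w : E d, volume (Metric.closedBall w 1) = c := by
    intro w
    rw [Measure.addHaar_closedBall' volume w zero_le_one, hc_def,
      Measure.addHaar_closedBall' volume (0 : E d) zero_le_one]
    simp
  -- pointwise bound
  have step1 : ∀ z : E d, (⨆ w ∈ Metric.closedBall (0 : E d) R, u (z + w)) ≤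
      c⁻¹ * ∫⁻ y in Metric.closedBall (0 : E d) (R + 1), M (z + y) := by
    intro z
    refine iSup₂_le fun w hw => ?_
    have h1 : c * u (z + w) ≤ ∫⁻ y in Metric.closedBall w 1, M (z + y) := by
      have h2 : ∀ y ∈ Metric.closedBall w 1, u (z + w) ≤ M (z + y) := by
        intro y hy
        have hwy : w - y ∈ Metric.closedBall (0 : E d) 1 := by
          rw [Metric.mem_closedBall] at hy ⊢
          rw [dist_eq_norm, norm_sub_rev, ← dist_eq_norm]
          rw [dist_comm, dist_eq_norm, sub_zero, ← dist_eq_norm, dist_comm]; exact hy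
        have heq : z + y + (w - y) = z + w := by abel
        calc u (z + w) = u (z + y + (w - y)) := by rw [heq]
          _ ≤ M (z + y) := le_biSup (fun v => u (z + y + v)) hwy
      calc c * u (z + w) = ∫⁻ _ in Metric.closedBall w 1, u (z + w) := by
            rw [setLIntegral_const, hball w, mul_comm]
        _ ≤ ∫⁻ y in Metric.closedBall w 1, M (z + y) :=
            setLIntegral_mono (hM.comp (measurable_const.add measurable_id)) h2
    have h3 : (∫⁻ y in Metric.closedBall w 1, M (z + y)) ≤
        ∫⁻ y in Metric.closedBall (0 : E d) (R + 1), M (z + y) := by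
      apply lintegral_mono_set
      apply Metric.closedBall_subset_closedBall'
      simp only [dist_zero_right]
      have : ‖w‖ ≤ R := by simpa [Metric.mem_closedBall, dist_eq_norm] using hw
      linarith
    calc u (z + w) = c⁻¹ * (c * u (z + w)) := by
          rw [← mul_assoc, ENNReal.inv_mul_cancel hc0 hct, one_mul]
      _ ≤ c⁻¹ * ∫⁻ y in Metric.closedBall (0 : E d) (R + 1), M (z + y) := by
          exact mul_le_mul_right (h1.trans h3) _
  calc (∫⁻ z, ⨆ w ∈ Metric.closedBall (0 : E d) R, u (z + w))
      ≤ ∫⁻ z, c⁻¹ * ∫⁻ y in Metric.closedBall (0 : E d) (R + 1), M (z + y) :=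
        lintegral_mono step1
    _ = c⁻¹ * ∫⁻ z, ∫⁻ y in Metric.closedBall (0 : E d) (R + 1), M (z + y) := by
        rw [lintegral_const_mul' _ _ (ENNReal.inv_ne_top.2 hc0)]
    _ = c⁻¹ * ∫⁻ y in Metric.closedBall (0 : E d) (R + 1), ∫⁻ z, M (z + y) := by
        rw [lintegral_lintegral_swap]
        exact (hM.comp (measurable_fst.add measurable_snd)).aemeasurable
    _ = c⁻¹ * ∫⁻ _ in Metric.closedBall (0 : E d) (R + 1), ∫⁻ z, M z := by
        congr 1
        refine setLIntegral_congr_fun measurableSet_closedBall ?_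
        intro y _
        exact lintegral_add_right_eq_self M y
    _ = c⁻¹ * ((∫⁻ z, M z) * volume (Metric.closedBall (0 : E d) (R + 1))) := by
        rw [setLIntegral_const]
    _ ≤ ENNReal.ofReal ((R + 1) ^ d) * ∫⁻ z, M z := by
        rw [Measure.addHaar_closedBall' volume (0 : E d) (by linarith)]
        set a := ENNReal.ofReal ((R + 1) ^ Module.finrank ℝ (E d)) with ha
        have hfr : Module.finrank ℝ (E d) = d := finrank_euclideanSpace_fin
        have : c⁻¹ * ((∫⁻ z, M z) * (a * c)) = a * (∫⁻ z, M z) * (c⁻¹ * c) := by ring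
        rw [this, ENNReal.inv_mul_cancel hc0 hct, mul_one, ha, hfr]

lemma aux_anorm_le {d : ℕ} {F' : Type*} [NormedAddCommGroup F'] {κ p : ℝ}
    (hp : 1 ≤ p) (hκ : (d : ℝ) ≤ κ) (F : E d → F') (hF : Continuous F) :
    Anorm κ p F ≤ (∫⁻ z, ⨆ w ∈ Metric.closedBall (0 : E d) 1,
      ENNReal.ofReal (‖F (z + w)‖ ^ p)) ^ (1 / p) := by
  have hp0 : (0:ℝ) < p := lt_of_lt_of_le one_pos hp
  set u : E d → ℝ≥0∞ := fun x => ENNReal.ofReal (‖F x‖ ^ p) with hu_def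
  have hu : Continuous u :=
    ENNReal.continuous_ofReal.comp (hF.norm.rpow_const fun x => Or.inr hp0.le)
  set J1 : ℝ≥0∞ := ∫⁻ z, ⨆ w ∈ Metric.closedBall (0 : E d) 1, u (z + w) with hJ1
  refine iSup_le fun R => ?_
  have hR : (0:ℝ) ≤ (R:ℝ) := R.2
  set a : ℝ≥0∞ := ENNReal.ofReal (1 + (R:ℝ)) with ha_def
  have ha1 : 1 ≤ a := by
    rw [ha_def, ← ENNReal.ofReal_one]
    exact ENNReal.ofReal_le_ofReal (by linarith)
  have ha0 : a ≠ 0 := by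
    intro h; rw [h] at ha1; simp at ha1
  have hat : a ≠ ⊤ := ENNReal.ofReal_ne_top
  have hkey := aux_key u hu hR
  have hofj : ENNReal.ofReal (((R:ℝ) + 1) ^ d) = a ^ (d:ℝ) := by
    rw [ENNReal.ofReal_pow (by linarith), ha_def, add_comm (1:ℝ), ENNReal.rpow_natCast]
  calc a ^ (-(κ / p)) * (∫⁻ z, ⨆ w ∈ Metric.closedBall (0 : E d) (R:ℝ),
        u (z + w)) ^ (1 / p)
      ≤ a ^ (-(κ / p)) * (a ^ (d:ℝ) * J1) ^ (1 / p) := by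
        refine mul_le_mul_right ?_ _
        refine ENNReal.rpow_le_rpow ?_ (by positivity)
        rw [← hofj]; exact hkey
    _ = a ^ (-(κ / p)) * a ^ ((d:ℝ) * (1/p)) * J1 ^ (1 / p) := by
        rw [ENNReal.mul_rpow_of_nonneg _ _ (by positivity), ENNReal.rpow_mul, mul_assoc]
    _ = a ^ (-(κ / p) + (d:ℝ) * (1/p)) * J1 ^ (1 / p) := by
        rw [ENNReal.rpow_add _ _ ha0 hat]
    _ ≤ 1 * J1 ^ (1 / p) := by
        refine mul_le_mul_left ?_ _
        have he : -(κ / p) + (d:ℝ) * (1/p) ≤ 0 := by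
          rw [mul_one_div]
          have h2 : (d:ℝ)/p ≤ κ/p := div_le_div_of_nonneg_right hκ hp0.le
          linarith
        calc a ^ (-(κ / p) + (d:ℝ) * (1/p)) ≤ a ^ (0:ℝ) :=
              ENNReal.rpow_le_rpow_of_exponent_le ha1 he
          _ = 1 := ENNReal.rpow_zero
    _ = J1 ^ (1 / p) := one_mul _

lemma aux_tail {d : ℕ} (Ψ : E d → ℝ≥0∞) (hm : Measurable Ψ) (hfin : (∫⁻ z, Ψ z) ≠ ⊤) :
    Filter.Tendsto (fun n : ℕ => ∫⁻ z in (Metric.closedBall (0 : E d) (n:ℝ))ᶜ, Ψ z)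
      Filter.atTop (nhds 0) := by
  set ν : Measure (E d) := volume.withDensity Ψ with hν
  have hνs : ∀ s : Set (E d), MeasurableSet s → ν s = ∫⁻ z in s, Ψ z := by
    intro s hs; rw [hν, withDensity_apply _ hs]
  set s : ℕ → Set (E d) := fun n => (Metric.closedBall (0 : E d) (n:ℝ))ᶜ with hs_def
  have hsm : ∀ n, MeasurableSet (s n) := fun n => measurableSet_closedBall.compl
  have hanti : Antitone s := by
    intro n m hnm
    exact Set.compl_subset_compl.2
      (Metric.closedBall_subset_closedBall (by exact_mod_cast hnm))
  have hinter : (⋂ n, s n) = ∅ := by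
    ext x
    simp only [Set.mem_iInter, Set.mem_empty_iff_false, iff_false, not_forall, hs_def,
      Set.mem_compl_iff, not_not, Metric.mem_closedBall, dist_zero_right]
    obtain ⟨n, hn⟩ := exists_nat_gt ‖x‖
    exact ⟨n, hn.le⟩
  have hfin' : ∃ n, ν (s n) ≠ ⊤ := by
    refine ⟨0, ?_⟩
    rw [hνs _ (hsm 0)]
    exact (lt_of_le_of_lt (setLIntegral_le_lintegral _ _) hfin.lt_top).ne
  have := MeasureTheory.tendsto_measure_iInter_atTop (fun n => (hsm n).nullMeasurableSet) hanti hfin'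
  rw [hinter, measure_empty] at this
  refine this.congr fun n => hνs _ (hsm n)

lemma aux_sum_rpow {m : ℕ} (hm : 0 < m) (a : ℕ → ℝ) (ha : ∀ j, 0 ≤ a j) {p : ℝ}
    (hp : 0 < p) :
    (∑ j ∈ Finset.range m, a j) ^ p ≤ (m : ℝ) ^ p * ∑ j ∈ Finset.range m, a j ^ p := by
  have hne : (Finset.range m).Nonempty := Finset.nonempty_range_iff.2 hm.ne'
  set B : ℝ := (Finset.range m).sup' hne a with hB
  have hB0 : 0 ≤ B := by
    obtain ⟨j, hj, hjB⟩ := Finset.exists_mem_eq_sup' hne a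
    rw [hB, hjB]; exact ha j
  have h1 : (∑ j ∈ Finset.range m, a j) ≤ (m : ℝ) * B := by
    calc (∑ j ∈ Finset.range m, a j) ≤ (Finset.range m).card • B :=
        Finset.sum_le_card_nsmul _ _ _ fun j hj => Finset.le_sup' a hj
      _ = (m : ℝ) * B := by simp [nsmul_eq_mul]
  calc (∑ j ∈ Finset.range m, a j) ^ p ≤ ((m : ℝ) * B) ^ p :=
      Real.rpow_le_rpow (Finset.sum_nonneg fun j _ => ha j) h1 hp.le
    _ = (m : ℝ) ^ p * B ^ p := Real.mul_rpow (by positivity) hB0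
    _ ≤ (m : ℝ) ^ p * ∑ j ∈ Finset.range m, a j ^ p := by
      refine mul_le_mul_of_nonneg_left ?_ (by positivity)
      obtain ⟨j, hj, hjB⟩ := Finset.exists_mem_eq_sup' hne a
      rw [hB, hjB]
      exact Finset.single_le_sum (fun i _ => Real.rpow_nonneg (ha i) p) hj

lemma aux_zero_on_ball {d : ℕ} {f0 : E d → ℂ} {r : ℝ} (h : ∀ y : E d, ‖y‖ < r → f0 y = 0)
    (i : ℕ) {z : E d} (hz : ‖z‖ < r) : iteratedFDeriv ℝ i f0 z = 0 := by
  have hev : f0 =ᶠ[nhds z] (fun _ => (0 : ℂ)) := by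
    have hmem : Metric.ball (0 : E d) r ∈ nhds z :=
      Metric.isOpen_ball.mem_nhds (by simpa [Metric.mem_ball, dist_zero_right] using hz)
    filter_upwards [hmem] with y hy
    exact h y (by simpa [Metric.mem_ball, dist_zero_right] using hy)
  calc iteratedFDeriv ℝ i f0 z = iteratedFDeriv ℝ i (fun _ => (0 : ℂ)) z := by
        rw [← iteratedFDerivWithin_univ, ← iteratedFDerivWithin_univ]
        exact Filter.EventuallyEq.iteratedFDerivWithin_eq
          (by rw [nhdsWithin_univ]; exact hev) (h z hz) i
    _ = 0 := by rw [iteratedFDeriv_zero_fun]; rfl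

/-- The `B^{k,κ,p}` norm: `(Σ_{i ≤ k} ‖D^i f‖_{A^{κ,p}}^p)^{1/p}`, where `D^i f` denotes
the `i`-th (Fréchet) derivative of `f`. -/
noncomputable def Bnorm (d k : ℕ) (κ p : ℝ) (f : E d → ℂ) : ℝ≥0∞ :=
  (∑ i ∈ Finset.range (k + 1), Anorm κ p (iteratedFDeriv ℝ i f) ^ p) ^ (1 / p)

set_option maxHeartbeats 1000000 in
/-- Compactly supported `C^k` functions are dense in `B^{k,κ,p}`. -/
theorem statement6 (d k : ℕ) (hd : 1 ≤ d) (p κ : ℝ) (hp : 1 ≤ p) (hκ : (d : ℝ) ≤ κ)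
    (f : E d → ℂ) (hf : ContDiff ℝ k f)
    (hfin : ∀ i ≤ k, Anorm κ p (iteratedFDeriv ℝ i f) < ⊤)
    (ε : ℝ) (hε : 0 < ε) :
    ∃ g : E d → ℂ, ContDiff ℝ k g ∧ HasCompactSupport g ∧
      Bnorm d k κ p (f - g) ≤ ENNReal.ofReal ε := by
  classical
  have hp0 : (0:ℝ) < p := one_pos.trans_le hp
  have hp0' : p ≠ 0 := hp0.ne'
  -- the local maximal functions of the derivatives of f
  set Ψ : ℕ → E d → ℝ≥0∞ := fun j z => ⨆ w ∈ Metric.closedBall (0 : E d) 1,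
    ENNReal.ofReal (‖iteratedFDeriv ℝ j f (z + w)‖ ^ p) with hΨdef
  have hDfc : ∀ j, j ≤ k → Continuous fun x : E d =>
      ENNReal.ofReal (‖iteratedFDeriv ℝ j f x‖ ^ p) := by
    intro j hj
    exact ENNReal.continuous_ofReal.comp
      (((hf.continuous_iteratedFDeriv (by exact_mod_cast hj)).norm).rpow_const
        fun x => Or.inr hp0.le)
  have hΨmeas : ∀ j, j ≤ k → Measurable (Ψ j) := fun j hj => aux_meas_s6 _ (hDfc j hj) 1
  have hΨfin : ∀ j, j ≤ k → (∫⁻ z, Ψ j z) ≠ ⊤ := by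
    intro j hj
    have h1 : (ENNReal.ofReal (1 + ((1:NNReal):ℝ))) ^ (-(κ / p)) *
        (∫⁻ z, ⨆ w ∈ Metric.closedBall (0 : E d) ((1:NNReal):ℝ),
          ENNReal.ofReal (‖iteratedFDeriv ℝ j f (z + w)‖ ^ p)) ^ (1 / p) ≤
        Anorm κ p (iteratedFDeriv ℝ j f) :=
      le_iSup (fun R : NNReal => (ENNReal.ofReal (1 + (R : ℝ))) ^ (-(κ / p)) *
        (∫⁻ z, ⨆ w ∈ Metric.closedBall (0 : E d) (R : ℝ),
          ENNReal.ofReal (‖iteratedFDeriv ℝ j f (z + w)‖ ^ p)) ^ (1 / p)) (1 : NNReal)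
    simp only [NNReal.coe_one] at h1
    have h3 : (ENNReal.ofReal (1 + 1)) ^ (-(κ / p)) * (∫⁻ z, Ψ j z) ^ (1 / p) < ⊤ :=
      lt_of_le_of_lt h1 (hfin j hj)
    intro htop
    rw [htop, ENNReal.top_rpow_of_pos (by positivity), ENNReal.mul_top
      (ENNReal.rpow_pos (by norm_num) (by norm_num)).ne'] at h3
    exact (lt_irrefl _ h3)
  -- the bump function and bounds on its derivatives
  set χ : ContDiffBump (0 : E d) := ⟨1, 2, one_pos, one_lt_two⟩ with hχdef
  have hχbd : ∀ j : ℕ, ∃ C : ℝ, 0 ≤ C ∧ ∀ x : E d,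
      ‖iteratedFDeriv ℝ j (χ : E d → ℝ) x‖ ≤ C := by
    intro j
    have hb : BddAbove (Set.range fun x : E d => ‖iteratedFDeriv ℝ j (χ : E d → ℝ) x‖) := by
      apply ((χ.contDiff.continuous_iteratedFDeriv (mod_cast le_top)).norm
        ).bddAbove_range_of_hasCompactSupport
      apply HasCompactSupport.comp_left _ norm_zero
      exact χ.hasCompactSupport.iteratedFDeriv j
    obtain ⟨C, hC⟩ := hb
    exact ⟨max C 0, le_max_right _ _, fun x =>
      le_trans (hC (Set.mem_range_self x)) (le_max_left _ _)⟩
  choose C0 hC00 hC0 using hχbd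
  set Cb : ℝ := 1 + ∑ j ∈ Finset.range (k+1), C0 j with hCbdef
  have hCb1 : 1 ≤ Cb := by
    have : 0 ≤ ∑ j ∈ Finset.range (k+1), C0 j :=
      Finset.sum_nonneg fun j _ => hC00 j
    simp only [hCbdef]; linarith
  have hCb0 : 0 ≤ Cb := by linarith
  have hCbj : ∀ j, j ≤ k → ∀ x : E d, ‖iteratedFDeriv ℝ j (χ : E d → ℝ) x‖ ≤ Cb := by
    intro j hj x
    have h1 : C0 j ≤ ∑ j ∈ Finset.range (k+1), C0 j :=
      Finset.single_le_sum (fun i _ => hC00 i) (Finset.mem_range.2 (Nat.lt_succ_of_le hj))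
    calc ‖iteratedFDeriv ℝ j (χ : E d → ℝ) x‖ ≤ C0 j := hC0 j x
      _ ≤ Cb := by simp only [hCbdef]; linarith
  set A : ℝ := 1 + Cb * 2^k with hAdef
  have hA0 : 0 ≤ A := by positivity
  set c1 : ℝ≥0∞ := ENNReal.ofReal ((A * ((k:ℝ)+1)) ^ p) with hc1def
  have hc1t : c1 ≠ ⊤ := ENNReal.ofReal_ne_top
  -- choice of δ
  set K : ℝ≥0∞ := (k : ℝ≥0∞) + 1 with hKdef
  have hKt : K ≠ ⊤ := by simp [hKdef]
  have hDne : K * K * c1 + 1 ≠ ⊤ :=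
    ENNReal.add_ne_top.2 ⟨ENNReal.mul_ne_top (ENNReal.mul_ne_top hKt hKt) hc1t,
      ENNReal.one_ne_top⟩
  set T : ℝ≥0∞ := (ENNReal.ofReal ε) ^ p with hTdef
  have hT0 : T ≠ 0 := (ENNReal.rpow_pos (ENNReal.ofReal_pos.2 hε) ENNReal.ofReal_ne_top).ne'
  set δ : ℝ≥0∞ := T / (K * K * c1 + 1) with hδdef
  have hδ0 : 0 < δ := ENNReal.div_pos hT0 hDne
  -- choice of the radius n
  have hev : ∀ᶠ n : ℕ in Filter.atTop, ∀ j ∈ Finset.range (k+1),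
      (∫⁻ z in (Metric.closedBall (0 : E d) (n:ℝ))ᶜ, Ψ j z) < δ := by
    rw [Filter.eventually_all_finset]
    intro j hj
    have hj' : j ≤ k := by simpa using Nat.lt_succ_iff.1 (Finset.mem_range.1 hj)
    exact (aux_tail (Ψ j) (hΨmeas j hj') (hΨfin j hj')).eventually_lt_const hδ0
  obtain ⟨n, hn⟩ := hev.exists
  -- the cutoff
  set t : ℝ := ((n:ℝ) + 2)⁻¹ with htdef
  have ht0 : 0 < t := by positivity
  have ht1 : t ≤ 1 := by
    rw [htdef]
    rw [inv_le_one_iff₀]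
    right; linarith [Nat.cast_nonneg (α := ℝ) n]
  set L : E d →L[ℝ] E d := t • ContinuousLinearMap.id ℝ (E d) with hLdef
  have hLnorm : ‖L‖ ≤ 1 := by
    have h1 : ‖t • ContinuousLinearMap.id ℝ (E d)‖ ≤ ‖t‖ * ‖ContinuousLinearMap.id ℝ (E d)‖ :=
      ContinuousLinearMap.opNorm_smul_le _ _
    have h2 : ‖ContinuousLinearMap.id ℝ (E d)‖ ≤ 1 := ContinuousLinearMap.norm_id_le
    have h3 : ‖t‖ ≤ 1 := by rw [Real.norm_eq_abs, abs_of_pos ht0]; exact ht1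
    rw [hLdef]
    calc ‖t • ContinuousLinearMap.id ℝ (E d)‖ ≤ ‖t‖ * ‖ContinuousLinearMap.id ℝ (E d)‖ := h1
      _ ≤ 1 * 1 := mul_le_mul h3 h2 (norm_nonneg _) zero_le_one
      _ = 1 := one_mul 1
  have hLx : ∀ x : E d, L x = t • x := fun x => rfl
  set g : E d → ℂ := fun x => χ (L x) • f x with hgdef
  have hχtc : ∀ N : ℕ∞, ContDiff ℝ N fun x : E d => χ (L x) := by
    intro N
    exact χ.contDiff.comp L.contDiff
  have hg_smooth : ContDiff ℝ k g := ((hχtc (k:ℕ∞)).smul hf : )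
  have hg_supp : HasCompactSupport g := by
    refine HasCompactSupport.intro (isCompact_closedBall (0 : E d) (2*((n:ℝ)+2))) ?_
    intro x hx
    have hx' : 2*((n:ℝ)+2) < ‖x‖ := by
      simpa [Metric.mem_closedBall, dist_zero_right, not_le] using hx
    have hχ0 : χ (L x) = 0 := by
      apply χ.zero_of_le_dist
      have h1 : dist (L x) 0 = t * ‖x‖ := by
        rw [hLx, dist_zero_right, norm_smul, Real.norm_eq_abs, abs_of_pos ht0]
      have h2 : χ.rOut = 2 := rfl
      rw [h1, h2]
      have h4 : t * (2 * ((n:ℝ)+2)) = 2 := by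
        have hne : (n:ℝ) + 2 ≠ 0 := by positivity
        rw [htdef]
        field_simp
      calc (2:ℝ) = t * (2 * ((n:ℝ)+2)) := h4.symm
        _ ≤ t * ‖x‖ := mul_le_mul_of_nonneg_left hx'.le ht0.le
    rw [hgdef]; simp [hχ0]
  -- derivative bounds for the cutoff
  have hχt_bd : ∀ j, j ≤ k → ∀ x : E d, ‖iteratedFDeriv ℝ j (fun y => χ (L y)) x‖ ≤ Cb := by
    intro j hj x
    have hcomp : iteratedFDeriv ℝ j (fun y => χ (L y)) x =
        (iteratedFDeriv ℝ j (χ : E d → ℝ) (L x)).compContinuousLinearMap (fun _ => L) := by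
      have heq : (fun y => χ (L y)) = (χ : E d → ℝ) ∘ L := rfl
      rw [heq]
      exact ContinuousLinearMap.iteratedFDeriv_comp_right L
        (χ.contDiff : ContDiff ℝ j (χ : E d → ℝ)) x le_rfl
    rw [hcomp]
    calc ‖(iteratedFDeriv ℝ j (χ : E d → ℝ) (L x)).compContinuousLinearMap (fun _ => L)‖
        ≤ ‖iteratedFDeriv ℝ j (χ : E d → ℝ) (L x)‖ * ∏ _i : Fin j, ‖L‖ :=
          ContinuousMultilinearMap.norm_compContinuousLinearMap_le _ _
      _ ≤ Cb * 1 := by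
          refine mul_le_mul (hCbj j hj (L x)) ?_ ?_ hCb0
          · exact Finset.prod_le_one (fun _ _ => norm_nonneg _) (fun _ _ => hLnorm)
          · exact Finset.prod_nonneg fun _ _ => norm_nonneg _
      _ = Cb := mul_one Cb
  -- pointwise bound for derivatives of f - g
  set S : E d → ℝ := fun x => ∑ j ∈ Finset.range (k+1), ‖iteratedFDeriv ℝ j f x‖ with hSdef
  have hS0 : ∀ x, 0 ≤ S x := fun x => Finset.sum_nonneg fun j _ => norm_nonneg _
  have hSd : ∀ i, i ≤ k → ∀ x : E d, ‖iteratedFDeriv ℝ i f x‖ ≤ S x := by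
    intro i hi x
    exact Finset.single_le_sum (f := fun j => ‖iteratedFDeriv ℝ j f x‖)
      (fun j _ => norm_nonneg _) (Finset.mem_range.2 (Nat.lt_succ_of_le hi))
  have hfg : ContDiff ℝ k (f - g) := hf.sub hg_smooth
  have hFt : ∀ i, i ≤ k → ∀ x : E d, ‖iteratedFDeriv ℝ i (f - g) x‖ ≤ A * S x := by
    intro i hi x
    have hik : ((i:ℕ∞) : WithTop ℕ∞) ≤ ((k:ℕ∞) : WithTop ℕ∞) := by exact_mod_cast hi
    have hsub : iteratedFDeriv ℝ i (f - g) x =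
        iteratedFDeriv ℝ i f x - iteratedFDeriv ℝ i g x := by
      have h1 : f - g = f + (-g) := by rw [sub_eq_add_neg]
      have hgneg : ContDiff ℝ (i : ℕ∞) (-g) := (hg_smooth.of_le hik).neg
      rw [h1, iteratedFDeriv_add_apply (hf.of_le hik).contDiffAt hgneg.contDiffAt,
        iteratedFDeriv_neg_apply, ← sub_eq_add_neg]
    have hgb : ‖iteratedFDeriv ℝ i g x‖ ≤ Cb * 2^k * S x := by
      have h2 := norm_iteratedFDeriv_smul_le (𝕜 := ℝ) (hχtc (k:ℕ∞)) hf x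
        (n := i) (by exact_mod_cast hi)
      refine le_trans h2 ?_
      have h3 : ∀ j ∈ Finset.range (i+1), (i.choose j : ℝ) *
          ‖iteratedFDeriv ℝ j (fun y => χ (L y)) x‖ * ‖iteratedFDeriv ℝ (i-j) f x‖ ≤
          (i.choose j : ℝ) * (Cb * S x) := by
        intro j hj
        have hj' : j ≤ k := le_trans (Nat.lt_succ_iff.1 (Finset.mem_range.1 hj)) hi
        have hij : i - j ≤ k := le_trans (Nat.sub_le i j) hi
        calc (i.choose j : ℝ) * ‖iteratedFDeriv ℝ j (fun y => χ (L y)) x‖ *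
              ‖iteratedFDeriv ℝ (i-j) f x‖
            ≤ (i.choose j : ℝ) * Cb * S x := by
              refine mul_le_mul ?_ (hSd _ hij x) (norm_nonneg _) (by positivity)
              exact mul_le_mul_of_nonneg_left (hχt_bd j hj' x) (by positivity)
          _ = (i.choose j : ℝ) * (Cb * S x) := by ring
      calc (∑ j ∈ Finset.range (i+1), (i.choose j : ℝ) *
            ‖iteratedFDeriv ℝ j (fun y => χ (L y)) x‖ * ‖iteratedFDeriv ℝ (i-j) f x‖)
          ≤ ∑ j ∈ Finset.range (i+1), (i.choose j : ℝ) * (Cb * S x) :=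
            Finset.sum_le_sum h3
        _ = (2:ℝ)^i * (Cb * S x) := by
            rw [← Finset.sum_mul]
            congr 1
            have hch := Nat.sum_range_choose i
            calc ∑ j ∈ Finset.range (i+1), (i.choose j : ℝ)
                = ((∑ j ∈ Finset.range (i+1), i.choose j : ℕ) : ℝ) := by push_cast; ring
              _ = (2:ℝ)^i := by rw [hch]; push_cast; ring
        _ ≤ (2:ℝ)^k * (Cb * S x) := by
            refine mul_le_mul_of_nonneg_right ?_ (by positivity)
            exact pow_le_pow_right₀ one_le_two hi
        _ = Cb * 2^k * S x := by ring
    calc ‖iteratedFDeriv ℝ i (f - g) x‖ ≤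
          ‖iteratedFDeriv ℝ i f x‖ + ‖iteratedFDeriv ℝ i g x‖ := by
          rw [hsub]; exact norm_sub_le _ _
      _ ≤ S x + Cb * 2^k * S x := add_le_add (hSd i hi x) hgb
      _ = A * S x := by rw [hAdef]; ring
  -- vanishing of f - g near the origin
  have hzero : ∀ y : E d, ‖y‖ < (n:ℝ) + 2 → (f - g) y = 0 := by
    intro y hy
    have hχ1 : χ (L y) = 1 := by
      apply χ.one_of_mem_closedBall
      have h1 : dist (L y) 0 = t * ‖y‖ := by
        rw [hLx, dist_zero_right, norm_smul, Real.norm_eq_abs, abs_of_pos ht0]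
      have h2 : χ.rIn = 1 := rfl
      rw [Metric.mem_closedBall, h1, h2]
      calc t * ‖y‖ ≤ t * ((n:ℝ)+2) := mul_le_mul_of_nonneg_left hy.le ht0.le
        _ = 1 := by rw [htdef]; field_simp
    show f y - g y = 0
    rw [hgdef]
    simp [hχ1]
  have hFt0 : ∀ i (z : E d), ‖z‖ < (n:ℝ) + 2 → iteratedFDeriv ℝ i (f - g) z = 0 :=
    fun i z hz => aux_zero_on_ball hzero i hz
  -- main estimate for each derivative order
  have hmain : ∀ i, i ≤ k →
      Anorm κ p (iteratedFDeriv ℝ i (f - g)) ^ p ≤ c1 * (K * δ) := by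
    intro i hi
    have hik : ((i:ℕ∞) : WithTop ℕ∞) ≤ ((k:ℕ∞) : WithTop ℕ∞) := by exact_mod_cast hi
    have hcont : Continuous (iteratedFDeriv ℝ i (f - g)) :=
      hfg.continuous_iteratedFDeriv (by exact_mod_cast hi)
    set Mi : E d → ℝ≥0∞ := fun z => ⨆ w ∈ Metric.closedBall (0 : E d) 1,
      ENNReal.ofReal (‖iteratedFDeriv ℝ i (f - g) (z + w)‖ ^ p) with hMidef
    have h1 : Anorm κ p (iteratedFDeriv ℝ i (f - g)) ≤ (∫⁻ z, Mi z) ^ (1/p) :=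
      aux_anorm_le hp hκ _ hcont
    -- the integrand vanishes on the ball of radius n
    have hMi0 : ∀ z : E d, ‖z‖ ≤ (n:ℝ) → Mi z = 0 := by
      intro z hz
      refine le_antisymm ?_ zero_le
      refine iSup₂_le fun w hw => ?_
      have hw1 : ‖w‖ ≤ 1 := by
        simpa [Metric.mem_closedBall, dist_zero_right] using hw
      have hzw : ‖z + w‖ < (n:ℝ) + 2 := by
        calc ‖z + w‖ ≤ ‖z‖ + ‖w‖ := norm_add_le _ _
          _ ≤ (n:ℝ) + 1 := add_le_add hz hw1
          _ < (n:ℝ) + 2 := by linarith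
      rw [hFt0 i (z+w) hzw]
      simp [Real.zero_rpow hp0']
    have h2 : (∫⁻ z, Mi z) = ∫⁻ z in (Metric.closedBall (0 : E d) (n:ℝ))ᶜ, Mi z := by
      rw [← lintegral_indicator measurableSet_closedBall.compl]
      refine lintegral_congr fun z => ?_
      by_cases hz : z ∈ (Metric.closedBall (0 : E d) (n:ℝ))ᶜ
      · rw [Set.indicator_of_mem hz]
      · rw [Set.indicator_of_notMem hz]
        have hz' : ‖z‖ ≤ (n:ℝ) := by
          simpa [Metric.mem_closedBall, dist_zero_right] using not_not.1 hz
        exact hMi0 z hz'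
    -- pointwise comparison with the Ψ j
    have h3 : ∀ z : E d, Mi z ≤ c1 * ∑ j ∈ Finset.range (k+1), Ψ j z := by
      intro z
      refine iSup₂_le fun w hw => ?_
      have h5 : (A * S (z+w)) ^ p ≤
          (A * ((k:ℝ)+1)) ^ p * ∑ j ∈ Finset.range (k+1),
            ‖iteratedFDeriv ℝ j f (z+w)‖ ^ p := by
        have hsum := aux_sum_rpow (m := k+1) (Nat.succ_pos k)
          (fun j => ‖iteratedFDeriv ℝ j f (z+w)‖) (fun j => norm_nonneg _) hp0
        calc (A * S (z+w)) ^ p = A ^ p * S (z+w) ^ p :=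
              Real.mul_rpow hA0 (hS0 _)
          _ ≤ A ^ p * (((k:ℝ)+1) ^ p * ∑ j ∈ Finset.range (k+1),
                ‖iteratedFDeriv ℝ j f (z+w)‖ ^ p) := by
              refine mul_le_mul_of_nonneg_left ?_ (by positivity)
              simpa [Nat.cast_succ] using hsum
          _ = (A * ((k:ℝ)+1)) ^ p * ∑ j ∈ Finset.range (k+1),
                ‖iteratedFDeriv ℝ j f (z+w)‖ ^ p := by
              rw [Real.mul_rpow hA0 (by positivity)]; ring
      calc ENNReal.ofReal (‖iteratedFDeriv ℝ i (f - g) (z + w)‖ ^ p)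
          ≤ ENNReal.ofReal ((A * S (z+w)) ^ p) :=
            ENNReal.ofReal_le_ofReal
              (Real.rpow_le_rpow (norm_nonneg _) (hFt i hi (z+w)) hp0.le)
        _ ≤ ENNReal.ofReal ((A * ((k:ℝ)+1)) ^ p * ∑ j ∈ Finset.range (k+1),
              ‖iteratedFDeriv ℝ j f (z+w)‖ ^ p) := ENNReal.ofReal_le_ofReal h5
        _ = c1 * ∑ j ∈ Finset.range (k+1),
              ENNReal.ofReal (‖iteratedFDeriv ℝ j f (z+w)‖ ^ p) := by
            rw [ENNReal.ofReal_mul (by positivity),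
              ENNReal.ofReal_sum_of_nonneg (fun j _ => by positivity)]
        _ ≤ c1 * ∑ j ∈ Finset.range (k+1), Ψ j z := by
            refine mul_le_mul_right (Finset.sum_le_sum fun j _ => ?_) _
            exact le_biSup (fun w' => ENNReal.ofReal
              (‖iteratedFDeriv ℝ j f (z + w')‖ ^ p)) hw
    -- integrate
    have h4 : (∫⁻ z in (Metric.closedBall (0 : E d) (n:ℝ))ᶜ, Mi z) ≤ c1 * (K * δ) := by
      calc (∫⁻ z in (Metric.closedBall (0 : E d) (n:ℝ))ᶜ, Mi z)
          ≤ ∫⁻ z in (Metric.closedBall (0 : E d) (n:ℝ))ᶜ,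
              c1 * ∑ j ∈ Finset.range (k+1), Ψ j z := lintegral_mono h3
        _ = c1 * ∑ j ∈ Finset.range (k+1),
              ∫⁻ z in (Metric.closedBall (0 : E d) (n:ℝ))ᶜ, Ψ j z := by
            rw [lintegral_const_mul' _ _ hc1t, lintegral_finset_sum]
            intro j hj
            exact hΨmeas j (Nat.lt_succ_iff.1 (Finset.mem_range.1 hj))
        _ ≤ c1 * ∑ _j ∈ Finset.range (k+1), δ := by
            exact mul_le_mul_right (Finset.sum_le_sum fun j hj => (hn j hj).le) _
        _ = c1 * (K * δ) := by
            rw [Finset.sum_const, Finset.card_range, nsmul_eq_mul, hKdef]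
            push_cast
            ring
    calc Anorm κ p (iteratedFDeriv ℝ i (f - g)) ^ p
        ≤ ((∫⁻ z, Mi z) ^ (1/p)) ^ p := ENNReal.rpow_le_rpow h1 hp0.le
      _ = ∫⁻ z, Mi z := by
          rw [← ENNReal.rpow_mul, one_div, inv_mul_cancel₀ hp0', ENNReal.rpow_one]
      _ ≤ c1 * (K * δ) := by rw [h2]; exact h4
  -- conclusion
  refine ⟨g, hg_smooth, hg_supp, ?_⟩
  have hfinal : K * (c1 * (K * δ)) ≤ T := by
    have heq : K * (c1 * (K * δ)) = (K * K * c1) * δ := by ring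
    rw [heq]
    calc (K * K * c1) * δ ≤ (K * K * c1 + 1) * δ :=
        mul_le_mul_left le_self_add δ
      _ = (K * K * c1 + 1) * (T / (K * K * c1 + 1)) := by rw [hδdef]
      _ ≤ T := ENNReal.mul_div_le
  calc Bnorm d k κ p (f - g)
      = (∑ i ∈ Finset.range (k+1),
          Anorm κ p (iteratedFDeriv ℝ i (f - g)) ^ p) ^ (1/p) := rfl
    _ ≤ (∑ _i ∈ Finset.range (k+1), c1 * (K * δ)) ^ (1/p) := by
        refine ENNReal.rpow_le_rpow (Finset.sum_le_sum fun i hi => ?_) (by positivity)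
        exact hmain i (Nat.lt_succ_iff.1 (Finset.mem_range.1 hi))
    _ = (K * (c1 * (K * δ))) ^ (1/p) := by
        rw [Finset.sum_const, Finset.card_range, nsmul_eq_mul, hKdef]
        congr 1
        push_cast
        ring
    _ ≤ T ^ (1/p) := ENNReal.rpow_le_rpow hfinal (by positivity)
    _ = ENNReal.ofReal ε := by
        rw [hTdef, ← ENNReal.rpow_mul, mul_one_div, div_self hp0', ENNReal.rpow_one]
end

section
/- Let d ≥ 1, k ∈ ℕ, p ≥ 1, κ ≥ d. If (f_n) is a sequence in B^{k,κ,p}(ℝ^d) that is Cauchy with respect to the norm ‖·‖_{B^{k,κ,p}}, then there exists f ∈ B^{k,κ,p}(ℝ^d) such that ‖f_n − f‖_{B^{k,κ,p}} → 0 as n → ∞. In other words, B^{k,κ,p} is a Banach space. -/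
open MeasureTheory Filter Topology
open scoped ENNReal NNReal

universe u

variable {G : Type u} [NormedAddCommGroup G] [NormedSpace ℝ G]

theorem smoothLimit (k : ℕ) :
    ∀ {F : Type u} [NormedAddCommGroup F] [NormedSpace ℝ F] [CompleteSpace F]
    (f : ℕ → G → F) (g : G → F),
    (∀ n, ContDiff ℝ k (f n)) →
    (∀ i ≤ k, UniformCauchySeqOn (fun n => iteratedFDeriv ℝ i (f n)) atTop Set.univ) →
    (∀ x, Tendsto (fun n => f n x) atTop (𝓝 (g x))) →
    ContDiff ℝ k g ∧ ∀ i ≤ k, ∀ x,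
      Tendsto (fun n => iteratedFDeriv ℝ i (f n) x) atTop (𝓝 (iteratedFDeriv ℝ i g x)) := by
  induction k with
  | zero =>
    intro F _ _ _ f g hsm hUC hg
    have hfc : ∀ n, Continuous (f n) := fun n => (hsm n).continuous
    have h0 : UniformCauchySeqOn f atTop Set.univ := by
      have h00 := hUC 0 le_rfl
      rw [Metric.uniformCauchySeqOn_iff] at h00 ⊢
      intro ε hε
      obtain ⟨N, hN⟩ := h00 ε hε
      refine ⟨N, fun m hm n hn x hx => ?_⟩
      have := hN m hm n hn x hx
      rwa [iteratedFDeriv_zero_eq_comp, iteratedFDeriv_zero_eq_comp, Function.comp_apply,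
        Function.comp_apply, (continuousMultilinearCurryFin0 ℝ G F).symm.isometry.dist_eq] at this
    have hTU : TendstoUniformlyOn f g atTop Set.univ :=
      h0.tendstoUniformlyOn_of_tendsto (fun x _ => hg x)
    rw [tendstoUniformlyOn_univ] at hTU
    have hgc : Continuous g := hTU.continuous (Eventually.of_forall hfc).frequently
    refine ⟨contDiff_zero.mpr hgc, ?_⟩
    intro i hi x
    interval_cases i
    simp only [iteratedFDeriv_zero_eq_comp, Function.comp_apply]
    exact ((continuousMultilinearCurryFin0 ℝ G F).symm.continuous.tendsto _).comp (hg x)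
  | succ k ih =>
    intro F _ _ _ f g hsm hUC hg
    set f' : ℕ → G → (G →L[ℝ] F) := fun n => fderiv ℝ (f n) with hf'def
    have hsm' : ∀ n, ContDiff ℝ k (f' n) := fun n =>
      (hsm n).fderiv_right (by exact_mod_cast le_rfl)
    have hkey : ∀ (u : G → F) (j : ℕ) (x : G), iteratedFDeriv ℝ (j + 1) u x =
        (continuousMultilinearCurryRightEquiv' ℝ j G F).symm
          (iteratedFDeriv ℝ j (fderiv ℝ u) x) := by
      intro u j x
      rw [iteratedFDeriv_succ_eq_comp_right]
      rfl
    have hUC' : ∀ i ≤ k, UniformCauchySeqOn (fun n => iteratedFDeriv ℝ i (f' n)) atTop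
        Set.univ := by
      intro i hi
      have h1 := hUC (i + 1) (Nat.succ_le_succ hi)
      rw [Metric.uniformCauchySeqOn_iff] at h1 ⊢
      intro ε hε
      obtain ⟨N, hN⟩ := h1 ε hε
      refine ⟨N, fun m hm n hn x hx => ?_⟩
      have := hN m hm n hn x hx
      rwa [hkey, hkey,
        (continuousMultilinearCurryRightEquiv' ℝ i G F).symm.isometry.dist_eq] at this
    have hcau' : ∀ x, CauchySeq fun n => f' n x := by
      intro x
      have h0 := (hUC' 0 (Nat.zero_le k)).cauchySeq (Set.mem_univ x)
      rw [Metric.cauchySeq_iff] at h0 ⊢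
      intro ε hε
      obtain ⟨N, hN⟩ := h0 ε hε
      refine ⟨N, fun m hm n hn => ?_⟩
      have := hN m hm n hn
      rwa [iteratedFDeriv_zero_eq_comp, iteratedFDeriv_zero_eq_comp, Function.comp_apply,
        Function.comp_apply,
        (continuousMultilinearCurryFin0 ℝ G (G →L[ℝ] F)).symm.isometry.dist_eq] at this
    have hex : ∀ x, ∃ l, Tendsto (fun n => f' n x) atTop (𝓝 l) := fun x =>
      cauchySeq_tendsto_of_complete (hcau' x)
    choose g' hg' using hex
    obtain ⟨hg'sm, hder'⟩ := ih f' g' hsm' hUC' hg'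
    have hUCf' : UniformCauchySeqOn f' atTop Set.univ := by
      have h0 := hUC' 0 (Nat.zero_le k)
      rw [Metric.uniformCauchySeqOn_iff] at h0 ⊢
      intro ε hε
      obtain ⟨N, hN⟩ := h0 ε hε
      refine ⟨N, fun m hm n hn x hx => ?_⟩
      have := hN m hm n hn x hx
      rwa [iteratedFDeriv_zero_eq_comp, iteratedFDeriv_zero_eq_comp, Function.comp_apply,
        Function.comp_apply,
        (continuousMultilinearCurryFin0 ℝ G (G →L[ℝ] F)).symm.isometry.dist_eq] at this
    have hTUf' : TendstoUniformly f' g' atTop := by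
      have := hUCf'.tendstoUniformlyOn_of_tendsto fun x _ => hg' x
      rwa [tendstoUniformlyOn_univ] at this
    have hder : ∀ x, HasFDerivAt g (g' x) x := by
      refine hasFDerivAt_of_tendstoUniformly hTUf' (fun n x => ?_) hg
      exact ((hsm n).differentiable (by simp)
        ).differentiableAt.hasFDerivAt
    have hfg : fderiv ℝ g = g' := funext fun x => (hder x).fderiv
    have hgsm : ContDiff ℝ (k + 1 : ℕ) g := by
      have h2 : ContDiff ℝ (((k : ℕ∞) : WithTop ℕ∞) + 1) g :=
        contDiff_succ_iff_fderiv.mpr ⟨fun x => (hder x).differentiableAt,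
          by simp, hfg ▸ (by exact_mod_cast hg'sm)⟩
      exact_mod_cast h2
    refine ⟨hgsm, ?_⟩
    intro i hi x
    match i with
    | 0 =>
      simp only [iteratedFDeriv_zero_eq_comp, Function.comp_apply]
      exact ((continuousMultilinearCurryFin0 ℝ G F).symm.continuous.tendsto _).comp (hg x)
    | (j + 1) =>
      have hj : j ≤ k := Nat.succ_le_succ_iff.mp hi
      have h1 : Tendsto (fun n => iteratedFDeriv ℝ j (f' n) x) atTop
          (𝓝 (iteratedFDeriv ℝ j (fderiv ℝ g) x)) := by
        rw [hfg]; exact hder' j hj x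
      have h2 := ((continuousMultilinearCurryRightEquiv' ℝ j G F).symm.continuous.tendsto
        _).comp h1
      simp only [Function.comp_def] at h2 ⊢
      rw [hkey g j x]
      exact h2.congr fun n => (hkey (f n) j x).symm

section lemmas
variable {d : ℕ} {F : Type*} [NormedAddCommGroup F] {κ p : ℝ}

/-- measurability of the inner sup -/
lemma measurable_inner_sup (p R : ℝ) (hp : (0:ℝ) ≤ p) {h : E d → F} (hh : Continuous h) :
    Measurable (fun z : E d => ⨆ w ∈ Metric.closedBall (0 : E d) R,
      ENNReal.ofReal (‖h (z + w)‖ ^ p)) := by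
  apply LowerSemicontinuous.measurable
  intro z₀ y hy
  change y < ⨆ w ∈ Metric.closedBall (0 : E d) R, ENNReal.ofReal (‖h (z₀ + w)‖ ^ p) at hy
  rw [lt_iSup_iff] at hy
  obtain ⟨w, hy⟩ := hy
  rw [lt_iSup_iff] at hy
  obtain ⟨hw, hy⟩ := hy
  have hcont : Continuous (fun z : E d => ENNReal.ofReal (‖h (z + w)‖ ^ p)) := by
    apply ENNReal.continuous_ofReal.comp
    exact ((hh.comp (continuous_id.add continuous_const)).norm).rpow_const
      (fun x => Or.inr hp)
  have : {z : E d | y < ENNReal.ofReal (‖h (z + w)‖ ^ p)} ∈ nhds z₀ :=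
    (isOpen_Ioi.preimage hcont).mem_nhds hy
  filter_upwards [this] with z hz
  exact lt_of_lt_of_le hz (le_iSup₂ (f := fun w _ => ENNReal.ofReal (‖h (z + w)‖ ^ p)) w hw)

/-- The A-norm dominates pointwise values. -/
lemma anorm_point (hp : 1 ≤ p) (hκ : 0 ≤ κ) (h : E d → F) (x : E d) :
    ENNReal.ofReal (‖h x‖ ^ p) ≤
      ENNReal.ofReal 2 ^ κ * (volume (Metric.closedBall (0 : E d) 1))⁻¹ *
        (Anorm κ p h) ^ p := by
  have hp0 : (0:ℝ) < p := lt_of_lt_of_le one_pos hp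
  set S : E d → ℝ≥0∞ := fun z => ⨆ w ∈ Metric.closedBall (0 : E d) (1:ℝ),
    ENNReal.ofReal (‖h (z + w)‖ ^ p) with hS
  set I : ℝ≥0∞ := ∫⁻ z, S z with hI
  set V : ℝ≥0∞ := volume (Metric.closedBall (0 : E d) 1) with hV
  have hV0 : V ≠ 0 := (Metric.measure_closedBall_pos volume (0 : E d) one_pos).ne'
  have hVt : V ≠ ⊤ := measure_closedBall_lt_top.ne
  -- step 1 : pointwise lower bound for I
  have h2 : ENNReal.ofReal (‖h x‖ ^ p) * V ≤ I := by
    have hVx : volume (Metric.closedBall x 1) = V := by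
      rw [hV]; exact Measure.addHaar_closedBall_center volume x 1
    rw [← hVx]
    rw [← lintegral_indicator_const measurableSet_closedBall]
    apply lintegral_mono
    intro z
    by_cases hz : z ∈ Metric.closedBall x 1
    · rw [Set.indicator_of_mem hz]
      have hz' : dist z x ≤ 1 := Metric.mem_closedBall.mp hz
      have hw : x - z ∈ Metric.closedBall (0 : E d) (1:ℝ) := by
        rw [mem_closedBall_zero_iff, ← dist_eq_norm, dist_comm]
        exact hz'
      calc ENNReal.ofReal (‖h x‖ ^ p)
          = ENNReal.ofReal (‖h (z + (x - z))‖ ^ p) := by rw [add_sub_cancel]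
        _ ≤ S z := le_iSup₂ (f := fun w (_ : w ∈ Metric.closedBall (0 : E d) (1:ℝ)) =>
            ENNReal.ofReal (‖h (z + w)‖ ^ p)) (x - z) hw
    · rw [Set.indicator_of_notMem hz]; exact zero_le
  -- step 2 : I ≤ 2^κ * Anorm^p
  have h3 : ENNReal.ofReal 2 ^ (-(κ / p)) * I ^ (1 / p) ≤ Anorm κ p h := by
    have hle := le_iSup (fun R : NNReal => (ENNReal.ofReal (1 + (R : ℝ))) ^ (-(κ / p)) *
      (∫⁻ z, ⨆ w ∈ Metric.closedBall (0 : E d) ((R : ℝ)),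
        ENNReal.ofReal (‖h (z + w)‖ ^ p)) ^ (1 / p)) (1 : NNReal)
    simp only [NNReal.coe_one] at hle
    rw [show ENNReal.ofReal (1 + 1) = ENNReal.ofReal 2 by norm_num] at hle
    exact hle
  have hc0 : (ENNReal.ofReal 2) ^ (κ / p) ≠ 0 :=
    (ENNReal.rpow_pos (by norm_num) (by norm_num)).ne'
  have hct : (ENNReal.ofReal 2) ^ (κ / p) ≠ ⊤ :=
    ENNReal.rpow_ne_top_of_nonneg (div_nonneg hκ hp0.le) (by norm_num)
  have h5 : I ^ (1 / p) ≤ ENNReal.ofReal 2 ^ (κ / p) * Anorm κ p h := by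
    rw [ENNReal.rpow_neg] at h3
    calc I ^ (1 / p)
        = ENNReal.ofReal 2 ^ (κ / p) * ((ENNReal.ofReal 2 ^ (κ / p))⁻¹ * I ^ (1 / p)) := by
          rw [← mul_assoc, ENNReal.mul_inv_cancel hc0 hct, one_mul]
      _ ≤ _ := mul_le_mul_right h3 _
  have h4 : I ≤ ENNReal.ofReal 2 ^ κ * (Anorm κ p h) ^ p := by
    calc I = (I ^ (1 / p)) ^ p := by
          rw [← ENNReal.rpow_mul, one_div, inv_mul_cancel₀ hp0.ne', ENNReal.rpow_one]
      _ ≤ (ENNReal.ofReal 2 ^ (κ / p) * Anorm κ p h) ^ p :=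
          ENNReal.rpow_le_rpow h5 hp0.le
      _ = ENNReal.ofReal 2 ^ κ * (Anorm κ p h) ^ p := by
          rw [ENNReal.mul_rpow_of_nonneg _ _ hp0.le, ← ENNReal.rpow_mul,
            div_mul_cancel₀ _ hp0.ne']
  calc ENNReal.ofReal (‖h x‖ ^ p)
      = ENNReal.ofReal (‖h x‖ ^ p) * V * V⁻¹ := by
        rw [mul_assoc, ENNReal.mul_inv_cancel hV0 hVt, mul_one]
    _ ≤ I * V⁻¹ := mul_le_mul_left h2 _
    _ ≤ ENNReal.ofReal 2 ^ κ * (Anorm κ p h) ^ p * V⁻¹ := mul_le_mul_left h4 _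
    _ = ENNReal.ofReal 2 ^ κ * V⁻¹ * (Anorm κ p h) ^ p := by ring

end lemmas

section more
variable {d : ℕ} {F : Type*} [NormedAddCommGroup F] {κ p : ℝ}

lemma anorm_congr {u v : E d → F} (h : ∀ x, ‖u x‖ = ‖v x‖) : Anorm κ p u = Anorm κ p v := by
  simp only [Anorm, h]

lemma anorm_le_of_tendsto (hp : 1 ≤ p) {u : ℕ → E d → F} {v : E d → F}
    (hu : ∀ m, Continuous (u m))
    (hv : ∀ x, Filter.Tendsto (fun m => u m x) atTop (𝓝 (v x)))
    {a : ℝ≥0∞} (ha : a ≠ ⊤) (hle : ∀ᶠ m in atTop, Anorm κ p (u m) ≤ a) :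
    Anorm κ p v ≤ a := by
  have hp0 : (0:ℝ) < p := lt_of_lt_of_le one_pos hp
  refine iSup_le fun R => ?_
  set c : ℝ≥0∞ := ENNReal.ofReal (1 + (R : ℝ)) ^ (-(κ / p)) with hc
  have hb0 : (0:ℝ≥0∞) < ENNReal.ofReal (1 + (R:ℝ)) := ENNReal.ofReal_pos.mpr (by positivity)
  have hbt : ENNReal.ofReal (1 + (R:ℝ)) ≠ ⊤ := ENNReal.ofReal_ne_top
  have hc0 : c ≠ 0 := (ENNReal.rpow_pos hb0 hbt).ne'
  have hct : c ≠ ⊤ := by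
    simp only [hc, Ne, ENNReal.rpow_eq_top_iff, not_or, not_and]
    exact ⟨fun h => absurd h hb0.ne', fun h => absurd h hbt⟩
  set Sm : ℕ → E d → ℝ≥0∞ := fun m z => ⨆ w ∈ Metric.closedBall (0 : E d) (R : ℝ),
    ENNReal.ofReal (‖u m (z + w)‖ ^ p) with hSm
  have key1 : ∀ z, (⨆ w ∈ Metric.closedBall (0 : E d) (R : ℝ),
      ENNReal.ofReal (‖v (z + w)‖ ^ p)) ≤ Filter.liminf (fun m => Sm m z) atTop := by
    intro z
    refine iSup₂_le fun w hw => ?_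
    have h1 : Filter.Tendsto (fun m => ENNReal.ofReal (‖u m (z + w)‖ ^ p)) atTop
        (𝓝 (ENNReal.ofReal (‖v (z + w)‖ ^ p))) := by
      apply (ENNReal.continuous_ofReal.tendsto _).comp
      exact ((hv (z + w)).norm).rpow_const (Or.inr hp0.le)
    calc ENNReal.ofReal (‖v (z + w)‖ ^ p)
        = Filter.liminf (fun m => ENNReal.ofReal (‖u m (z + w)‖ ^ p)) atTop :=
          h1.liminf_eq.symm
      _ ≤ Filter.liminf (fun m => Sm m z) atTop :=
          Filter.liminf_le_liminf (Filter.Eventually.of_forall fun m =>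
            le_iSup₂ (f := fun w (_ : w ∈ Metric.closedBall (0 : E d) (R:ℝ)) =>
              ENNReal.ofReal (‖u m (z + w)‖ ^ p)) w hw)
  have key3 : ∀ᶠ m in atTop, (∫⁻ z, Sm m z) ≤ (c⁻¹ * a) ^ p := by
    filter_upwards [hle] with m hm
    have h2 : c * (∫⁻ z, Sm m z) ^ (1 / p) ≤ a := by
      refine le_trans ?_ hm
      exact le_iSup (fun R : NNReal => (ENNReal.ofReal (1 + (R : ℝ))) ^ (-(κ / p)) *
        (∫⁻ z, ⨆ w ∈ Metric.closedBall (0 : E d) (R : ℝ),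
          ENNReal.ofReal (‖u m (z + w)‖ ^ p)) ^ (1 / p)) R
    have h3 : (∫⁻ z, Sm m z) ^ (1 / p) ≤ c⁻¹ * a := by
      calc (∫⁻ z, Sm m z) ^ (1 / p)
          = c⁻¹ * (c * (∫⁻ z, Sm m z) ^ (1 / p)) := by
            rw [← mul_assoc, ENNReal.inv_mul_cancel hc0 hct, one_mul]
        _ ≤ c⁻¹ * a := mul_le_mul_right h2 _
    calc (∫⁻ z, Sm m z) = ((∫⁻ z, Sm m z) ^ (1 / p)) ^ p := by
          rw [← ENNReal.rpow_mul, one_div, inv_mul_cancel₀ hp0.ne', ENNReal.rpow_one]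
      _ ≤ (c⁻¹ * a) ^ p := ENNReal.rpow_le_rpow h3 hp0.le
  have key2 : (∫⁻ z, ⨆ w ∈ Metric.closedBall (0 : E d) (R : ℝ),
      ENNReal.ofReal (‖v (z + w)‖ ^ p)) ≤ (c⁻¹ * a) ^ p := by
    calc (∫⁻ z, ⨆ w ∈ Metric.closedBall (0 : E d) (R : ℝ),
          ENNReal.ofReal (‖v (z + w)‖ ^ p))
        ≤ ∫⁻ z, Filter.liminf (fun m => Sm m z) atTop := lintegral_mono key1
      _ ≤ Filter.liminf (fun m => ∫⁻ z, Sm m z) atTop :=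
          lintegral_liminf_le fun m => measurable_inner_sup p (R:ℝ) hp0.le (hu m)
      _ ≤ (c⁻¹ * a) ^ p := by
          apply Filter.liminf_le_of_frequently_le' (key3.frequently)
  calc c * (∫⁻ z, ⨆ w ∈ Metric.closedBall (0 : E d) (R : ℝ),
        ENNReal.ofReal (‖v (z + w)‖ ^ p)) ^ (1 / p)
      ≤ c * ((c⁻¹ * a) ^ p) ^ (1 / p) :=
        mul_le_mul_right (ENNReal.rpow_le_rpow key2 (by positivity)) _
    _ = c * (c⁻¹ * a) := by
        rw [← ENNReal.rpow_mul, mul_one_div, div_self hp0.ne', ENNReal.rpow_one]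
    _ = a := by rw [← mul_assoc, ENNReal.mul_inv_cancel hc0 hct, one_mul]

lemma anorm_add (hp : 1 ≤ p) {u v : E d → F} (hu : Continuous u) (hv : Continuous v) :
    Anorm κ p (fun x => u x + v x) ≤ 2 * (Anorm κ p u + Anorm κ p v) := by
  have hp0 : (0:ℝ) < p := lt_of_lt_of_le one_pos hp
  refine iSup_le fun R => ?_
  set c : ℝ≥0∞ := ENNReal.ofReal (1 + (R : ℝ)) ^ (-(κ / p)) with hc
  set K : ℝ≥0∞ := ENNReal.ofReal (2 ^ p) with hK
  have hKt : K ≠ ⊤ := ENNReal.ofReal_ne_top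
  have hre : ∀ a b : ℝ, 0 ≤ a → 0 ≤ b → (a + b) ^ p ≤ 2 ^ p * (a ^ p + b ^ p) := by
    intro a b ha hb
    have h1 : a + b ≤ 2 * max a b := by
      rcases le_total a b with h | h
      · rw [max_eq_right h]; linarith
      · rw [max_eq_left h]; linarith
    have h2 : (a + b) ^ p ≤ (2 * max a b) ^ p :=
      Real.rpow_le_rpow (by positivity) h1 hp0.le
    have h3 : (2 * max a b) ^ p = 2 ^ p * (max a b) ^ p :=
      Real.mul_rpow (by norm_num) (le_max_of_le_left ha)
    have h4 : (max a b) ^ p ≤ a ^ p + b ^ p := by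
      rcases le_total a b with h | h
      · rw [max_eq_right h]
        exact le_add_of_nonneg_left (Real.rpow_nonneg ha p)
      · rw [max_eq_left h]
        exact le_add_of_nonneg_right (Real.rpow_nonneg hb p)
    calc (a + b) ^ p ≤ 2 ^ p * (max a b) ^ p := h2.trans_eq h3
      _ ≤ 2 ^ p * (a ^ p + b ^ p) := by
          apply mul_le_mul_of_nonneg_left h4 (by positivity)
  set Su : E d → ℝ≥0∞ := fun z => ⨆ w ∈ Metric.closedBall (0 : E d) (R : ℝ),
    ENNReal.ofReal (‖u (z + w)‖ ^ p) with hSu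
  set Sv : E d → ℝ≥0∞ := fun z => ⨆ w ∈ Metric.closedBall (0 : E d) (R : ℝ),
    ENNReal.ofReal (‖v (z + w)‖ ^ p) with hSv
  have hsup : ∀ z, (⨆ w ∈ Metric.closedBall (0 : E d) (R : ℝ),
      ENNReal.ofReal (‖u (z + w) + v (z + w)‖ ^ p)) ≤ K * (Su z + Sv z) := by
    intro z
    refine iSup₂_le fun w hw => ?_
    calc ENNReal.ofReal (‖u (z + w) + v (z + w)‖ ^ p)
        ≤ ENNReal.ofReal ((‖u (z + w)‖ + ‖v (z + w)‖) ^ p) := by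
          apply ENNReal.ofReal_le_ofReal
          exact Real.rpow_le_rpow (norm_nonneg _) (norm_add_le _ _) hp0.le
      _ ≤ ENNReal.ofReal (2 ^ p * (‖u (z + w)‖ ^ p + ‖v (z + w)‖ ^ p)) :=
          ENNReal.ofReal_le_ofReal (hre _ _ (norm_nonneg _) (norm_nonneg _))
      _ = K * (ENNReal.ofReal (‖u (z + w)‖ ^ p) + ENNReal.ofReal (‖v (z + w)‖ ^ p)) := by
          rw [ENNReal.ofReal_mul (by positivity),
            ENNReal.ofReal_add (by positivity) (by positivity)]
      _ ≤ K * (Su z + Sv z) := by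
          apply mul_le_mul_right
          apply add_le_add
          · exact le_iSup₂ (f := fun w (_ : w ∈ Metric.closedBall (0 : E d) (R:ℝ)) =>
              ENNReal.ofReal (‖u (z + w)‖ ^ p)) w hw
          · exact le_iSup₂ (f := fun w (_ : w ∈ Metric.closedBall (0 : E d) (R:ℝ)) =>
              ENNReal.ofReal (‖v (z + w)‖ ^ p)) w hw
  have hint : (∫⁻ z, ⨆ w ∈ Metric.closedBall (0 : E d) (R : ℝ),
      ENNReal.ofReal (‖u (z + w) + v (z + w)‖ ^ p)) ≤
      K * ((∫⁻ z, Su z) + ∫⁻ z, Sv z) := by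
    calc (∫⁻ z, ⨆ w ∈ Metric.closedBall (0 : E d) (R : ℝ),
          ENNReal.ofReal (‖u (z + w) + v (z + w)‖ ^ p))
        ≤ ∫⁻ z, K * (Su z + Sv z) := lintegral_mono hsup
      _ = K * ∫⁻ z, (Su z + Sv z) := lintegral_const_mul' K _ hKt
      _ = K * ((∫⁻ z, Su z) + ∫⁻ z, Sv z) := by
          rw [lintegral_add_left (measurable_inner_sup p (R:ℝ) hp0.le hu)]
  have hK1p : K ^ (1 / p) = 2 := by
    rw [hK, ← ENNReal.ofReal_rpow_of_pos (by norm_num), ← ENNReal.rpow_mul,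
      mul_one_div, div_self hp0.ne', ENNReal.rpow_one]
    norm_num
  calc c * (∫⁻ z, ⨆ w ∈ Metric.closedBall (0 : E d) (R : ℝ),
        ENNReal.ofReal (‖u (z + w) + v (z + w)‖ ^ p)) ^ (1 / p)
      ≤ c * (K * ((∫⁻ z, Su z) + ∫⁻ z, Sv z)) ^ (1 / p) :=
        mul_le_mul_right (ENNReal.rpow_le_rpow hint (by positivity)) _
    _ = c * (2 * ((∫⁻ z, Su z) + ∫⁻ z, Sv z) ^ (1 / p)) := by
        rw [ENNReal.mul_rpow_of_nonneg _ _ (by positivity), hK1p]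
    _ ≤ c * (2 * ((∫⁻ z, Su z) ^ (1 / p) + (∫⁻ z, Sv z) ^ (1 / p))) := by
        apply mul_le_mul_right
        apply mul_le_mul_right
        exact ENNReal.rpow_add_le_add_rpow _ _ (by positivity) (by
          rw [div_le_one hp0]; exact hp)
    _ = 2 * (c * (∫⁻ z, Su z) ^ (1 / p) + c * (∫⁻ z, Sv z) ^ (1 / p)) := by ring
    _ ≤ 2 * (Anorm κ p u + Anorm κ p v) := by
        apply mul_le_mul_right
        apply add_le_add
        · exact le_iSup (fun R : NNReal => (ENNReal.ofReal (1 + (R : ℝ))) ^ (-(κ / p)) *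
            (∫⁻ z, ⨆ w ∈ Metric.closedBall (0 : E d) (R : ℝ),
              ENNReal.ofReal (‖u (z + w)‖ ^ p)) ^ (1 / p)) R
        · exact le_iSup (fun R : NNReal => (ENNReal.ofReal (1 + (R : ℝ))) ^ (-(κ / p)) *
            (∫⁻ z, ⨆ w ∈ Metric.closedBall (0 : E d) (R : ℝ),
              ENNReal.ofReal (‖v (z + w)‖ ^ p)) ^ (1 / p)) R
end more

/-- `B^{k,κ,p}` is complete: every Cauchy sequence has a limit in `B^{k,κ,p}`. -/
theorem statement7 (d k : ℕ) (hd : 1 ≤ d) (p κ : ℝ) (hp : 1 ≤ p) (hκ : (d : ℝ) ≤ κ)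
    (f : ℕ → E d → ℂ)
    (hsm : ∀ n, ContDiff ℝ k (f n))
    (hfin : ∀ n, ∀ i ≤ k, Anorm κ p (iteratedFDeriv ℝ i (f n)) < ⊤)
    (hcau : ∀ ε : ℝ, 0 < ε → ∃ N, ∀ m ≥ N, ∀ n ≥ N,
      Bnorm d k κ p (f m - f n) ≤ ENNReal.ofReal ε) :
    ∃ g : E d → ℂ, ContDiff ℝ k g ∧
      (∀ i ≤ k, Anorm κ p (iteratedFDeriv ℝ i g) < ⊤) ∧
      Filter.Tendsto (fun n => Bnorm d k κ p (f n - g)) Filter.atTop (nhds 0) := by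
  have hp0 : (0:ℝ) < p := lt_of_lt_of_le one_pos hp
  have hκ0 : (0:ℝ) ≤ κ := le_trans (by positivity) hκ
  -- iterated derivative of a difference
  have hsub : ∀ (u v : E d → ℂ), ContDiff ℝ k u → ContDiff ℝ k v → ∀ i ≤ k,
      iteratedFDeriv ℝ i (u - v) =
        fun x => iteratedFDeriv ℝ i u x - iteratedFDeriv ℝ i v x := by
    intro u v hu hv i hi
    funext x
    have hm : ContDiff ℝ i u := hu.of_le (by exact_mod_cast hi)
    have hn : ContDiff ℝ i v := hv.of_le (by exact_mod_cast hi)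
    have hnn : ContDiff ℝ (i : ℕ) (-v) := hn.neg
    rw [sub_eq_add_neg, iteratedFDeriv_add_apply hm.contDiffAt hnn.contDiffAt, iteratedFDeriv_neg_apply,
      ← sub_eq_add_neg]
  -- each A-norm is bounded by the B-norm
  have hAB : ∀ (h : E d → ℂ) i, i ≤ k → Anorm κ p (iteratedFDeriv ℝ i h) ≤
      Bnorm d k κ p h := by
    intro h i hi
    have h1 : Anorm κ p (iteratedFDeriv ℝ i h) ^ p ≤
        ∑ j ∈ Finset.range (k+1), Anorm κ p (iteratedFDeriv ℝ j h) ^ p :=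
      Finset.single_le_sum (f := fun j => Anorm κ p (iteratedFDeriv ℝ j h) ^ p)
        (fun j _ => zero_le) (Finset.mem_range.mpr (Nat.lt_succ_of_le hi))
    calc Anorm κ p (iteratedFDeriv ℝ i h)
        = (Anorm κ p (iteratedFDeriv ℝ i h) ^ p) ^ (1/p) := by
          rw [← ENNReal.rpow_mul, mul_one_div, div_self hp0.ne', ENNReal.rpow_one]
      _ ≤ Bnorm d k κ p h := ENNReal.rpow_le_rpow h1 (by positivity)
  -- constant from anorm_point
  set K : ℝ≥0∞ := ENNReal.ofReal 2 ^ κ * (volume (Metric.closedBall (0 : E d) 1))⁻¹ with hK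
  have hV0 : volume (Metric.closedBall (0 : E d) 1) ≠ 0 :=
    (Metric.measure_closedBall_pos volume (0 : E d) one_pos).ne'
  have hKt : K ≠ ⊤ := ENNReal.mul_ne_top
    (ENNReal.rpow_ne_top_of_nonneg hκ0 ENNReal.ofReal_ne_top) (ENNReal.inv_ne_top.mpr hV0)
  -- uniform Cauchy property of all iterated derivatives
  have hUC : ∀ i ≤ k, UniformCauchySeqOn (fun n => iteratedFDeriv ℝ i (f n)) atTop
      Set.univ := by
    intro i hi
    rw [Metric.uniformCauchySeqOn_iff]
    intro δ hδ
    set ε : ℝ := δ / (K.toReal + 1) ^ (1/p) with hε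
    have hεpos : 0 < ε := div_pos hδ (Real.rpow_pos_of_pos (by positivity) _)
    obtain ⟨N, hN⟩ := hcau ε hεpos
    refine ⟨N, fun m hm n hn x _ => ?_⟩
    have h1 : Anorm κ p (iteratedFDeriv ℝ i (f m - f n)) ≤ ENNReal.ofReal ε :=
      (hAB _ i hi).trans (hN m hm n hn)
    have h2 := anorm_point hp hκ0 (iteratedFDeriv ℝ i (f m - f n)) x
    rw [dist_eq_norm]
    have h3 : ‖iteratedFDeriv ℝ i (f m) x - iteratedFDeriv ℝ i (f n) x‖ =
        ‖iteratedFDeriv ℝ i (f m - f n) x‖ := by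
      rw [hsub (f m) (f n) (hsm m) (hsm n) i hi]
    rw [h3]
    have h4 : ENNReal.ofReal (‖iteratedFDeriv ℝ i (f m - f n) x‖ ^ p) ≤
        K * ENNReal.ofReal (ε ^ p) := by
      refine h2.trans ?_
      rw [← ENNReal.ofReal_rpow_of_pos hεpos]
      exact mul_le_mul_right (ENNReal.rpow_le_rpow h1 hp0.le) K
    have hKεt : K * ENNReal.ofReal (ε ^ p) ≠ ⊤ :=
      ENNReal.mul_ne_top hKt ENNReal.ofReal_ne_top
    have h6 : ‖iteratedFDeriv ℝ i (f m - f n) x‖ ^ p ≤ K.toReal * ε ^ p := by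
      have := (ENNReal.ofReal_le_iff_le_toReal hKεt).mp h4
      rwa [ENNReal.toReal_mul, ENNReal.toReal_ofReal (by positivity)] at this
    have h8 : K.toReal * ε ^ p < δ ^ p := by
      have hKnn : (0:ℝ) ≤ K.toReal := ENNReal.toReal_nonneg
      have hδp : (0:ℝ) < δ ^ p := Real.rpow_pos_of_pos hδ p
      rw [hε, Real.div_rpow hδ.le (by positivity), ← Real.rpow_mul (by positivity),
        one_div_mul_cancel hp0.ne', Real.rpow_one]
      calc K.toReal * (δ ^ p / (K.toReal + 1)) < (K.toReal + 1) * (δ ^ p / (K.toReal + 1)) := by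
            apply mul_lt_mul_of_pos_right (lt_add_one _) (by positivity)
        _ = δ ^ p := by field_simp
    have h9 : ‖iteratedFDeriv ℝ i (f m - f n) x‖ ^ p < δ ^ p := lt_of_le_of_lt h6 h8
    by_contra hcon
    push_neg at hcon
    exact absurd (Real.rpow_le_rpow hδ.le hcon hp0.le) (not_le.mpr h9)
  -- pointwise limit
  have hC : ∀ x, CauchySeq fun n => f n x := by
    intro x
    have h0 := (hUC 0 (Nat.zero_le k)).cauchySeq (Set.mem_univ x)
    rw [Metric.cauchySeq_iff] at h0 ⊢
    intro ε hε
    obtain ⟨N, hN⟩ := h0 ε hε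
    refine ⟨N, fun m hm n hn => ?_⟩
    have := hN m hm n hn
    rwa [iteratedFDeriv_zero_eq_comp, iteratedFDeriv_zero_eq_comp, Function.comp_apply,
      Function.comp_apply,
      (continuousMultilinearCurryFin0 ℝ (E d) ℂ).symm.isometry.dist_eq] at this
  have hex : ∀ x, ∃ l, Tendsto (fun n => f n x) atTop (𝓝 l) := fun x =>
    cauchySeq_tendsto_of_complete (hC x)
  choose g hg using hex
  obtain ⟨hgsm, hder⟩ := smoothLimit k f g hsm hUC hg
  -- main estimate
  have hmain : ∀ δ : ℝ, 0 < δ → ∃ N, ∀ n ≥ N, ∀ i ≤ k,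
      Anorm κ p (iteratedFDeriv ℝ i (f n - g)) ≤ ENNReal.ofReal δ := by
    intro δ hδ
    obtain ⟨N, hN⟩ := hcau δ hδ
    refine ⟨N, fun n hn i hi => ?_⟩
    refine anorm_le_of_tendsto hp (u := fun m => iteratedFDeriv ℝ i (f n - f m))
      (fun m => ?_) (fun x => ?_) ENNReal.ofReal_ne_top ?_
    · show Continuous (iteratedFDeriv ℝ i (f n - f m))
      rw [hsub (f n) (f m) (hsm n) (hsm m) i hi]
      exact (ContDiff.continuous_iteratedFDeriv (by exact_mod_cast hi) (hsm n)).sub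
        (ContDiff.continuous_iteratedFDeriv (by exact_mod_cast hi) (hsm m))
    · have h1 : iteratedFDeriv ℝ i (f n - g) x =
          iteratedFDeriv ℝ i (f n) x - iteratedFDeriv ℝ i g x := by
        rw [hsub (f n) g (hsm n) hgsm i hi]
      rw [h1]
      have h2 : ∀ m, iteratedFDeriv ℝ i (f n - f m) x =
          iteratedFDeriv ℝ i (f n) x - iteratedFDeriv ℝ i (f m) x := by
        intro m; rw [hsub (f n) (f m) (hsm n) (hsm m) i hi]
      simp only [h2]
      exact Tendsto.sub tendsto_const_nhds (hder i hi x)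
    · filter_upwards [Filter.eventually_ge_atTop N] with m hm
      calc Anorm κ p (iteratedFDeriv ℝ i (f n - f m)) ≤ Bnorm d k κ p (f n - f m) :=
            hAB _ i hi
        _ ≤ ENNReal.ofReal δ := hN n hn m hm
  refine ⟨g, hgsm, ?_, ?_⟩
  · -- finiteness of the A-norms of g
    obtain ⟨N, hN⟩ := hmain 1 one_pos
    intro i hi
    have hcf : Continuous (iteratedFDeriv ℝ i (f N)) :=
      ContDiff.continuous_iteratedFDeriv (by exact_mod_cast hi) (hsm N)
    have hcg : Continuous (iteratedFDeriv ℝ i g) :=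
      ContDiff.continuous_iteratedFDeriv (by exact_mod_cast hi) hgsm
    have heq : Anorm κ p (iteratedFDeriv ℝ i g) = Anorm κ p
        (fun x => iteratedFDeriv ℝ i (f N) x +
          (iteratedFDeriv ℝ i g x - iteratedFDeriv ℝ i (f N) x)) := by
      apply anorm_congr
      intro x
      rw [add_sub_cancel]
    rw [heq]
    have hsecond : Anorm κ p (fun x => iteratedFDeriv ℝ i g x - iteratedFDeriv ℝ i (f N) x)
        ≤ ENNReal.ofReal 1 := by
      have h1 : Anorm κ p (fun x => iteratedFDeriv ℝ i g x - iteratedFDeriv ℝ i (f N) x)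
          = Anorm κ p (iteratedFDeriv ℝ i (f N - g)) := by
        apply anorm_congr
        intro x
        rw [hsub (f N) g (hsm N) hgsm i hi, norm_sub_rev]
      rw [h1]
      exact hN N le_rfl i hi
    calc Anorm κ p (fun x => iteratedFDeriv ℝ i (f N) x +
          (iteratedFDeriv ℝ i g x - iteratedFDeriv ℝ i (f N) x))
        ≤ 2 * (Anorm κ p (iteratedFDeriv ℝ i (f N)) +
            Anorm κ p (fun x => iteratedFDeriv ℝ i g x - iteratedFDeriv ℝ i (f N) x)) :=
          anorm_add hp hcf (hcg.sub hcf)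
      _ < ⊤ := by
          apply ENNReal.mul_lt_top (by norm_num)
          exact ENNReal.add_lt_top.mpr ⟨hfin N i hi,
            lt_of_le_of_lt hsecond (by norm_num)⟩
  · -- convergence of the B-norms
    rw [ENNReal.tendsto_atTop_zero]
    intro ε hε
    set C : ℝ≥0∞ := ((k : ℝ≥0∞) + 1) ^ (1/p) with hCdef
    have hCt : C ≠ ⊤ := ENNReal.rpow_ne_top_of_nonneg (by positivity)
      (by simp [ENNReal.add_ne_top])
    set ε' : ℝ≥0∞ := min ε 1 with hε'
    have hε'0 : ε' ≠ 0 := (lt_min hε one_pos).ne'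
    have hε't : ε' ≠ ⊤ := ne_top_of_le_ne_top ENNReal.one_ne_top (min_le_right _ _)
    have hdent : C + 1 ≠ ⊤ := ENNReal.add_ne_top.mpr ⟨hCt, ENNReal.one_ne_top⟩
    have hden0 : C + 1 ≠ 0 := by simp
    have hdivt : ε' / (C + 1) ≠ ⊤ := (ENNReal.div_lt_top hε't hden0).ne
    have hdiv0 : ε' / (C + 1) ≠ 0 := by
      simp only [ne_eq, ENNReal.div_eq_zero_iff, not_or]
      exact ⟨hε'0, hdent⟩
    set δ : ℝ := (ε' / (C + 1)).toReal with hδdef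
    have hδpos : 0 < δ := ENNReal.toReal_pos hdiv0 hdivt
    obtain ⟨N, hN⟩ := hmain δ hδpos
    refine ⟨N, fun n hn => ?_⟩
    calc Bnorm d k κ p (f n - g)
        ≤ (∑ i ∈ Finset.range (k+1), ENNReal.ofReal δ ^ p) ^ (1/p) := by
          apply ENNReal.rpow_le_rpow _ (by positivity)
          apply Finset.sum_le_sum
          intro i hi'
          exact ENNReal.rpow_le_rpow
            (hN n hn i (Nat.lt_succ_iff.mp (Finset.mem_range.mp hi'))) hp0.le
      _ = (((k+1 : ℕ) : ℝ≥0∞) * ENNReal.ofReal δ ^ p) ^ (1/p) := by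
          rw [Finset.sum_const, Finset.card_range, nsmul_eq_mul]
      _ = C * ENNReal.ofReal δ := by
          rw [ENNReal.mul_rpow_of_nonneg _ _ (by positivity), ← ENNReal.rpow_mul,
            mul_one_div, div_self hp0.ne', ENNReal.rpow_one]
          congr 2
          push_cast
          ring
      _ = C * (ε' / (C + 1)) := by rw [hδdef, ENNReal.ofReal_toReal hdivt]
      _ ≤ (C + 1) * (ε' / (C + 1)) := mul_le_mul_left le_self_add _
      _ = ε' := ENNReal.mul_div_cancel hden0 hdent
      _ ≤ ε := min_le_left _ _
end

section
/- Let d ≥ 1, 1 < p < ∞ with conjugate exponent q = p/(p−1), and let 0 ≤ l < k < ∞. Set r := (k + d(p−1)/p) / (l + (k−l)/p + d(p−1)/p). There exists a constant C = C(k,l,p,d) > 0 such that for every measurable α : ℝ^d_x × ℝ^d_v → ℂ with α ∈ L^{2p}(ℝ^{2d}) and finite k-th velocity moment M_k(α) := ∫∫ |v|^k |α(x,v)|² dv dx, the l-th local velocity moment m_l(α)(x) := ∫ |v|^l |α(x,v)|² dv satisfies ‖m_l(α)‖_{L^r(ℝ^d_x)} ≤ C ‖α‖_{L^{2p}(ℝ^{2d})}^{2p(k−l)/(pk+(p−1)d)}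 · M_k(α)^{(lp+d(p−1))/(pk+(p−1)d)}. -/
open MeasureTheory
open scoped ENNReal NNReal

lemma ennreal_opt {a b : ℝ} (ha : 0 < a) (hb : 0 < b) {X c G B : ℝ≥0∞}
    (hc : c ≠ 0) (hc' : c ≠ ⊤) (hG : G ≠ 0) (hG' : G ≠ ⊤) (hB : B ≠ 0) (hB' : B ≠ ⊤)
    (h : ∀ R : ℝ, 0 < R →
      X ≤ ENNReal.ofReal (R ^ a) * (c * G) + ENNReal.ofReal (R ^ (-b)) * B) :
    X ≤ 2 * (c * G) ^ (b / (a + b)) * B ^ (a / (a + b)) := by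
  set g : ℝ := (c * G).toReal with hg
  set β : ℝ := B.toReal with hβ
  have hab : 0 < a + b := by linarith
  have hcG : c * G ≠ 0 := mul_ne_zero hc hG
  have hcG' : c * G ≠ ⊤ := ENNReal.mul_ne_top hc' hG'
  have hg0 : 0 < g := ENNReal.toReal_pos hcG hcG'
  have hβ0 : 0 < β := ENNReal.toReal_pos hB hB'
  set R : ℝ := (β / g) ^ (1 / (a + b)) with hR
  have hbg : (0:ℝ) < β / g := div_pos hβ0 hg0
  have hR0 : 0 < R := Real.rpow_pos_of_pos hbg _
  have h1 : R ^ a = β ^ (a / (a + b)) / g ^ (a / (a + b)) := by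
    rw [hR, ← Real.rpow_mul hbg.le, show 1 / (a + b) * a = a / (a + b) by ring,
      Real.div_rpow hβ0.le hg0.le]
  have h2 : g ^ (b / (a + b)) = g / g ^ (a / (a + b)) := by
    rw [show b / (a + b) = 1 - a / (a + b) by field_simp; ring, Real.rpow_sub hg0,
      Real.rpow_one]
  have key1 : R ^ a * g = g ^ (b / (a + b)) * β ^ (a / (a + b)) := by
    rw [h1, h2]; ring
  have h3 : R ^ (-b) = g ^ (b / (a + b)) / β ^ (b / (a + b)) := by
    rw [hR, ← Real.rpow_mul hbg.le, show 1 / (a + b) * (-b) = -(b / (a + b)) by ring,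
      Real.rpow_neg hbg.le, Real.div_rpow hβ0.le hg0.le, inv_div]
  have h4 : β ^ (a / (a + b)) = β / β ^ (b / (a + b)) := by
    rw [show a / (a + b) = 1 - b / (a + b) by field_simp; ring, Real.rpow_sub hβ0,
      Real.rpow_one]
  have key2 : R ^ (-b) * β = g ^ (b / (a + b)) * β ^ (a / (a + b)) := by
    rw [h3, h4]; ring
  calc X ≤ ENNReal.ofReal (R ^ a) * (c * G) + ENNReal.ofReal (R ^ (-b)) * B := h R hR0
    _ = ENNReal.ofReal (R ^ a * g) + ENNReal.ofReal (R ^ (-b) * β) := by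
        rw [ENNReal.ofReal_mul (Real.rpow_pos_of_pos hR0 _).le,
          ENNReal.ofReal_mul (Real.rpow_pos_of_pos hR0 _).le,
          hg, hβ, ENNReal.ofReal_toReal hcG', ENNReal.ofReal_toReal hB']
    _ = 2 * ENNReal.ofReal (g ^ (b / (a + b)) * β ^ (a / (a + b))) := by
        rw [key1, key2, two_mul]
    _ = 2 * (c * G) ^ (b / (a + b)) * B ^ (a / (a + b)) := by
        rw [ENNReal.ofReal_mul (Real.rpow_pos_of_pos hg0 _).le,
          ← ENNReal.ofReal_rpow_of_pos hg0, ← ENNReal.ofReal_rpow_of_pos hβ0,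
          hg, hβ, ENNReal.ofReal_toReal hcG', ENNReal.ofReal_toReal hB', mul_assoc]

lemma pointwise {d : ℕ} (hd : 1 ≤ d) {p q l k : ℝ} (hp : 1 < p) (hq : q = p / (p - 1))
    (hl : 0 ≤ l) (hlk : l < k) (f : E d → ℂ) (hf : Measurable f) :
    (∫⁻ v : E d, ENNReal.ofReal (‖v‖ ^ l * ‖f v‖ ^ 2)) ≤
      2 * ((volume (Metric.ball (0 : E d) 1)) ^ (1/q) *
          (∫⁻ v : E d, ENNReal.ofReal (‖f v‖ ^ (2*p))) ^ (1/p)) ^ ((k-l)/((l+d/q)+(k-l))) *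
        (∫⁻ v : E d, ENNReal.ofReal (‖v‖ ^ k * ‖f v‖ ^ 2)) ^ ((l+d/q)/((l+d/q)+(k-l))) := by
  haveI : Nonempty (Fin d) := ⟨⟨0, hd⟩⟩
  have hp0 : 0 < p := lt_trans zero_lt_one hp
  have hq0 : 0 < q := by rw [hq]; exact div_pos (by linarith) (by linarith)
  have hpq : p.HolderConjugate q := (Real.holderConjugate_iff_eq_conjExponent hp).2 hq
  set a : ℝ := l + d/q with haa
  set b : ℝ := k - l with hbb
  have ha : 0 < a := by
    have h1 : (0:ℝ) < d/q := div_pos (by exact_mod_cast hd) hq0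
    simp only [haa]; linarith
  have hb : 0 < b := by simp [hbb]; linarith
  set κ : ℝ≥0∞ := volume (Metric.ball (0 : E d) 1) with hκ
  have hκ0 : κ ≠ 0 := (Metric.measure_ball_pos volume _ one_pos).ne'
  have hκT : κ ≠ ⊤ := (measure_ball_lt_top).ne
  set c : ℝ≥0∞ := κ ^ (1/q) with hc
  have hc0 : c ≠ 0 := by
    simp only [hc, ne_eq, ENNReal.rpow_eq_zero_iff]
    push_neg
    exact ⟨fun h => absurd h hκ0, fun h => absurd h hκT⟩
  have hcT : c ≠ ⊤ := by
    simp only [hc, ne_eq, ENNReal.rpow_eq_top_iff]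
    push_neg
    exact ⟨fun h => absurd h hκ0, fun h => absurd h hκT⟩
  set I : ℝ≥0∞ := ∫⁻ v : E d, ENNReal.ofReal (‖f v‖ ^ (2*p)) with hI
  set B : ℝ≥0∞ := ∫⁻ v : E d, ENNReal.ofReal (‖v‖ ^ k * ‖f v‖ ^ 2) with hB
  set G : ℝ≥0∞ := I ^ (1/p) with hG
  have hmeasI : Measurable fun v : E d => ENNReal.ofReal (‖f v‖ ^ (2*p)) := by fun_prop
  have hmeasB : Measurable fun v : E d => ENNReal.ofReal (‖v‖ ^ k * ‖f v‖ ^ 2) := by fun_prop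
  have hmeasA : Measurable fun v : E d => ENNReal.ofReal (‖v‖ ^ l * ‖f v‖ ^ 2) := by fun_prop
  -- main estimate for every radius R
  have hmain : ∀ R : ℝ, 0 < R →
      (∫⁻ v : E d, ENNReal.ofReal (‖v‖ ^ l * ‖f v‖ ^ 2)) ≤
        ENNReal.ofReal (R ^ a) * (c * G) + ENNReal.ofReal (R ^ (-b)) * B := by
    intro R hR0
    set S := Metric.ball (0 : E d) R with hS
    have hvolS : volume S = ENNReal.ofReal (R ^ (d:ℝ)) * κ := by
      rw [hS, Measure.addHaar_ball _ _ hR0.le, ← Real.rpow_natCast]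
      congr 2
      simp
    have hball : (∫⁻ v in S, ENNReal.ofReal (‖v‖ ^ l * ‖f v‖ ^ 2)) ≤
        ENNReal.ofReal (R ^ a) * (c * G) := by
      have hsplit : (∫⁻ v in S, ENNReal.ofReal (‖v‖ ^ l * ‖f v‖ ^ 2))
          = ∫⁻ v in S, ENNReal.ofReal (‖v‖ ^ l) * ENNReal.ofReal (‖f v‖ ^ 2) := by
        congr 1
        funext v
        exact ENNReal.ofReal_mul (Real.rpow_nonneg (norm_nonneg v) l)
      have hold : (∫⁻ v in S, (fun v : E d => ENNReal.ofReal (‖v‖ ^ l)) v *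
            (fun v : E d => ENNReal.ofReal (‖f v‖ ^ 2)) v) ≤
          (∫⁻ v in S, ENNReal.ofReal (‖v‖ ^ l) ^ q) ^ (1/q) *
          (∫⁻ v in S, ENNReal.ofReal (‖f v‖ ^ 2) ^ p) ^ (1/p) :=
        ENNReal.lintegral_mul_le_Lp_mul_Lq _ hpq.symm (by fun_prop) (by fun_prop)
      have hfac1 : (∫⁻ v in S, ENNReal.ofReal (‖v‖ ^ l) ^ q) ≤
          ENNReal.ofReal (R ^ (l*q + d)) * κ := by
        calc (∫⁻ v in S, ENNReal.ofReal (‖v‖ ^ l) ^ q)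
            ≤ ∫⁻ _v in S, ENNReal.ofReal (R ^ (l*q)) := by
              refine setLIntegral_mono measurable_const (fun v hv => ?_)
              rw [ENNReal.ofReal_rpow_of_nonneg (Real.rpow_nonneg (norm_nonneg v) l) hq0.le,
                ← Real.rpow_mul (norm_nonneg v)]
              exact ENNReal.ofReal_le_ofReal (Real.rpow_le_rpow (norm_nonneg v)
                (le_of_lt (by simpa [hS, Metric.mem_ball, dist_zero_right] using hv))
                (by positivity))
          _ = ENNReal.ofReal (R ^ (l*q)) * volume S := setLIntegral_const _ _
          _ = ENNReal.ofReal (R ^ (l*q + d)) * κ := by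
              rw [hvolS, ← mul_assoc, ← ENNReal.ofReal_mul (by positivity),
                ← Real.rpow_add hR0]
      have hfac2 : (∫⁻ v in S, ENNReal.ofReal (‖f v‖ ^ 2) ^ p) ≤ I := by
        calc (∫⁻ v in S, ENNReal.ofReal (‖f v‖ ^ 2) ^ p)
            ≤ ∫⁻ v, ENNReal.ofReal (‖f v‖ ^ 2) ^ p := setLIntegral_le_lintegral _ _
          _ = I := by
              rw [hI]
              congr 1
              funext v
              rw [ENNReal.ofReal_rpow_of_nonneg (by positivity) hp0.le]
              congr 1
              rw [← Real.rpow_natCast ‖f v‖ 2, ← Real.rpow_mul (norm_nonneg _)]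
              norm_num
      calc (∫⁻ v in S, ENNReal.ofReal (‖v‖ ^ l * ‖f v‖ ^ 2))
          ≤ (∫⁻ v in S, ENNReal.ofReal (‖v‖ ^ l) ^ q) ^ (1/q) *
            (∫⁻ v in S, ENNReal.ofReal (‖f v‖ ^ 2) ^ p) ^ (1/p) := by
            rw [hsplit]; exact hold
        _ ≤ (ENNReal.ofReal (R ^ (l*q + d)) * κ) ^ (1/q) * I ^ (1/p) := by
            gcongr
        _ = ENNReal.ofReal (R ^ a) * (c * G) := by
            rw [ENNReal.mul_rpow_of_nonneg _ _ (by positivity : (0:ℝ) ≤ 1/q),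
              ENNReal.ofReal_rpow_of_nonneg (by positivity) (by positivity : (0:ℝ) ≤ 1/q),
              ← Real.rpow_mul (by positivity), hG, hc, mul_assoc]
            congr 2
            rw [haa]
            field_simp
    have htail : (∫⁻ v in Sᶜ, ENNReal.ofReal (‖v‖ ^ l * ‖f v‖ ^ 2)) ≤
        ENNReal.ofReal (R ^ (-b)) * B := by
      calc (∫⁻ v in Sᶜ, ENNReal.ofReal (‖v‖ ^ l * ‖f v‖ ^ 2))
          ≤ ∫⁻ v in Sᶜ, ENNReal.ofReal (R ^ (-b)) * ENNReal.ofReal (‖v‖ ^ k * ‖f v‖ ^ 2) := by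
            refine setLIntegral_mono (by fun_prop) (fun v hv => ?_)
            have hRv : R ≤ ‖v‖ := by
              simpa [hS, Metric.mem_ball, dist_zero_right, not_lt] using hv
            have hv0 : 0 < ‖v‖ := lt_of_lt_of_le hR0 hRv
            rw [← ENNReal.ofReal_mul (by positivity)]
            refine ENNReal.ofReal_le_ofReal ?_
            have h1 : ‖v‖ ^ l = ‖v‖ ^ (l - k) * ‖v‖ ^ k := by
              rw [← Real.rpow_add hv0]; ring_nf
            have h2 : ‖v‖ ^ (l - k) ≤ R ^ (l - k) :=
              Real.rpow_le_rpow_of_nonpos hR0 hRv (by linarith)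
            calc ‖v‖ ^ l * ‖f v‖ ^ 2 = ‖v‖ ^ (l - k) * (‖v‖ ^ k * ‖f v‖ ^ 2) := by
                  rw [h1]; ring
              _ ≤ R ^ (l - k) * (‖v‖ ^ k * ‖f v‖ ^ 2) := by
                  refine mul_le_mul_of_nonneg_right h2 (by positivity)
              _ = R ^ (-b) * (‖v‖ ^ k * ‖f v‖ ^ 2) := by rw [hbb]; ring_nf
        _ = ENNReal.ofReal (R ^ (-b)) * ∫⁻ v in Sᶜ, ENNReal.ofReal (‖v‖ ^ k * ‖f v‖ ^ 2) :=
            lintegral_const_mul' _ _ ENNReal.ofReal_ne_top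
        _ ≤ ENNReal.ofReal (R ^ (-b)) * B := by
            gcongr
            exact setLIntegral_le_lintegral _ _
    calc (∫⁻ v : E d, ENNReal.ofReal (‖v‖ ^ l * ‖f v‖ ^ 2))
        = (∫⁻ v in S, ENNReal.ofReal (‖v‖ ^ l * ‖f v‖ ^ 2)) +
          ∫⁻ v in Sᶜ, ENNReal.ofReal (‖v‖ ^ l * ‖f v‖ ^ 2) :=
          (lintegral_add_compl _ measurableSet_ball).symm
      _ ≤ ENNReal.ofReal (R ^ a) * (c * G) + ENNReal.ofReal (R ^ (-b)) * B :=
          add_le_add hball htail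
  -- degenerate cases
  have hab : (0:ℝ) < a + b := by linarith
  have hθ1 : 0 < b/(a+b) := div_pos hb hab
  have hθ2 : 0 < a/(a+b) := div_pos ha hab
  by_cases hI0 : I = 0
  · have hz : (fun v : E d => ENNReal.ofReal (‖f v‖ ^ (2*p))) =ᵐ[volume] 0 :=
      (lintegral_eq_zero_iff hmeasI).1 hI0
    have hz2 : (fun v : E d => ENNReal.ofReal (‖v‖ ^ l * ‖f v‖ ^ 2)) =ᵐ[volume] 0 := by
      filter_upwards [hz] with v hv
      simp only [Pi.zero_apply, ENNReal.ofReal_eq_zero] at hv ⊢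
      have hfv : ‖f v‖ = 0 := by
        by_contra hne
        have h1 : 0 < ‖f v‖ := lt_of_le_of_ne (norm_nonneg _) (Ne.symm hne)
        have h2 := Real.rpow_pos_of_pos h1 (2*p)
        linarith
      rw [hfv]
      norm_num
    have hA0 : (∫⁻ v : E d, ENNReal.ofReal (‖v‖ ^ l * ‖f v‖ ^ 2)) = 0 := by
      rw [lintegral_congr_ae hz2]; simp
    rw [hA0]
    exact zero_le
  by_cases hB0 : B = 0
  · have hz : (fun v : E d => ENNReal.ofReal (‖v‖ ^ k * ‖f v‖ ^ 2)) =ᵐ[volume] 0 :=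
      (lintegral_eq_zero_iff hmeasB).1 hB0
    have hne : ∀ᵐ v : E d, v ≠ (0 : E d) := by
      rw [ae_iff]
      simpa using measure_singleton (0 : E d)
    have hz2 : (fun v : E d => ENNReal.ofReal (‖v‖ ^ l * ‖f v‖ ^ 2)) =ᵐ[volume] 0 := by
      filter_upwards [hz, hne] with v hv hv0
      simp only [Pi.zero_apply, ENNReal.ofReal_eq_zero] at hv ⊢
      have hvn : 0 < ‖v‖ := norm_pos_iff.2 hv0
      have hk2 : 0 < ‖v‖ ^ k := Real.rpow_pos_of_pos hvn k
      have hf2 : ‖f v‖ ^ 2 = 0 := by nlinarith [sq_nonneg ‖f v‖]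
      rw [hf2, mul_zero]
    have hA0 : (∫⁻ v : E d, ENNReal.ofReal (‖v‖ ^ l * ‖f v‖ ^ 2)) = 0 := by
      rw [lintegral_congr_ae hz2]; simp
    rw [hA0]
    exact zero_le
  by_cases hIT : I = ⊤
  · have hGtop : G = ⊤ := by
      rw [hG, hIT]
      exact ENNReal.top_rpow_of_pos (by positivity)
    have hcG : c * G = ⊤ := by rw [hGtop, ENNReal.mul_top hc0]
    have h1 : (c*G) ^ (b/(a+b)) = ⊤ := by
      rw [hcG]; exact ENNReal.top_rpow_of_pos hθ1
    have h2 : B ^ (a/(a+b)) ≠ 0 := by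
      simp only [ne_eq, ENNReal.rpow_eq_zero_iff, not_or]
      push_neg
      exact ⟨fun h => absurd h hB0, fun _ => hθ2.le⟩
    have : 2 * (c*G) ^ (b/(a+b)) * B ^ (a/(a+b)) = ⊤ := by
      rw [h1, ENNReal.mul_top (by norm_num : (2:ℝ≥0∞) ≠ 0), ENNReal.top_mul h2]
    rw [this]
    exact le_top
  by_cases hBT : B = ⊤
  · have hG0 : G ≠ 0 := by
      simp only [hG, ne_eq, ENNReal.rpow_eq_zero_iff, not_or]
      push_neg
      exact ⟨fun h => absurd h hI0, fun _ => (by positivity : (0:ℝ) ≤ 1/p)⟩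
    have h1 : (c*G) ^ (b/(a+b)) ≠ 0 := by
      simp only [ne_eq, ENNReal.rpow_eq_zero_iff, not_or]
      push_neg
      exact ⟨fun h => absurd h (mul_ne_zero hc0 hG0), fun _ => hθ1.le⟩
    have h2 : 2 * (c*G) ^ (b/(a+b)) ≠ 0 :=
      mul_ne_zero (by norm_num) h1
    have : 2 * (c*G) ^ (b/(a+b)) * B ^ (a/(a+b)) = ⊤ := by
      rw [hBT, ENNReal.top_rpow_of_pos hθ2, ENNReal.mul_top h2]
    rw [this]
    exact le_top
  have hG0 : G ≠ 0 := by
    simp only [hG, ne_eq, ENNReal.rpow_eq_zero_iff]; push_neg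
    exact ⟨fun h => absurd h hI0, fun h => absurd h hIT⟩
  have hGT : G ≠ ⊤ := by
    simp only [hG, ne_eq, ENNReal.rpow_eq_top_iff]; push_neg
    exact ⟨fun h => absurd h hI0, fun h => absurd h hIT⟩
  exact ennreal_opt ha hb hc0 hcT hG0 hGT hB0 hBT hmain


set_option maxHeartbeats 1000000 in
/-- Velocity-moment interpolation inequality: with
`r = (k + d(p−1)/p)/(l + (k−l)/p + d(p−1)/p)`, there is `C = C(k,l,p,d) > 0` such that
`‖m_l(α)‖_{L^r} ≤ C ‖α‖_{L^{2p}}^{2p(k−l)/(pk+(p−1)d)} M_k(α)^{(lp+d(p−1))/(pk+(p−1)d)}`. -/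
theorem statement9 (d : ℕ) (hd : 1 ≤ d) (p : ℝ) (hp : 1 < p)
    (l k : ℝ) (hl : 0 ≤ l) (hlk : l < k)
    (r : ℝ) (hr : r = (k + d * (p - 1) / p) / (l + (k - l) / p + d * (p - 1) / p)) :
    ∃ C > 0, ∀ α : E d × E d → ℂ, Measurable α →
      MemLp α (ENNReal.ofReal (2 * p)) volume →
      (∫⁻ z : E d × E d, ENNReal.ofReal (‖z.2‖ ^ k * ‖α z‖ ^ 2)) < ⊤ →
      (∫⁻ x : E d, (∫⁻ v : E d, ENNReal.ofReal (‖v‖ ^ l * ‖α (x, v)‖ ^ 2)) ^ r) ^ (1 / r) ≤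
        ENNReal.ofReal C *
          eLpNorm α (ENNReal.ofReal (2 * p)) volume ^
            (2 * p * (k - l) / (p * k + (p - 1) * d)) *
          (∫⁻ z : E d × E d, ENNReal.ofReal (‖z.2‖ ^ k * ‖α z‖ ^ 2)) ^
            ((l * p + d * (p - 1)) / (p * k + (p - 1) * d)) := by
  haveI : Nonempty (Fin d) := ⟨⟨0, hd⟩⟩
  have hp0 : 0 < p := by linarith
  have hd1 : (1:ℝ) ≤ d := by exact_mod_cast hd
  set q : ℝ := p / (p - 1) with hqdef
  have hq0 : 0 < q := div_pos (by linarith) (by linarith)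
  have hdq : (d:ℝ)/q = d*(p-1)/p := by
    rw [hqdef]; field_simp
  set a : ℝ := l + (d:ℝ)/q with haa
  set b : ℝ := k - l with hbb
  have hb : 0 < b := by simp only [hbb]; linarith
  have ha : 0 < a := by
    have h1 : (0:ℝ) < d/q := div_pos (by linarith) hq0
    simp only [haa]; linarith
  have hab : 0 < a + b := by linarith
  set D : ℝ := l + (k - l) / p + (d:ℝ) * (p - 1) / p with hDD
  have hD0 : 0 < D := by
    have h1 : 0 < (k-l)/p := div_pos (by linarith) hp0
    have h2 : 0 ≤ (d:ℝ)*(p-1)/p :=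
      div_nonneg (mul_nonneg (by positivity) (by linarith)) hp0.le
    simp only [hDD]; linarith
  have hNab : a + b = k + (d:ℝ) * (p - 1) / p := by
    simp only [haa, hbb, hdq]; ring
  have hr0 : 0 < r := by
    rw [hr, ← hNab]
    exact div_pos hab hD0
  set θ1 : ℝ := b/(a+b) with hθ1def
  set θ2 : ℝ := a/(a+b) with hθ2def
  have hθ1 : 0 < θ1 := div_pos hb hab
  have hθ2 : 0 < θ2 := div_pos ha hab
  have hθ1r : θ1 * r = b / D := by
    rw [hθ1def, hr, ← hNab]
    field_simp
  have hθ2r : θ2 * r = a / D := by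
    rw [hθ2def, hr, ← hNab]
    field_simp
  set P : ℝ := p * D / b with hPdef
  set Q : ℝ := D / a with hQdef
  have hpa : p * a = p*l + d*(p-1) := by
    simp only [haa, hdq]; field_simp
  have hpD : p * D = p*l + (k-l) + d*(p-1) := by
    simp only [hDD]; field_simp
  have hbpa : b + p * a = p * D := by
    simp only [hbb]; rw [hpa]; linarith [hpD]
  have hpDb : b < p * D := by
    have h2 : 0 < (d:ℝ)*(p-1) := by nlinarith
    have h3 : 0 ≤ p * l := by positivity
    simp only [hbb]; nlinarith [hpD]
  have hP1 : 1 < P := by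
    rw [hPdef, lt_div_iff₀ hb]
    linarith
  have hPQ : P.HolderConjugate Q := by
    rw [Real.holderConjugate_iff]
    constructor
    · exact hP1
    · rw [hPdef, hQdef, inv_div, inv_div,
        div_add_div _ _ (by positivity : p*D ≠ 0) hD0.ne',
        div_eq_one_iff_eq (by positivity : p*D*D ≠ 0)]
      linear_combination D * hbpa
  -- the constant
  set κ : ℝ≥0∞ := volume (Metric.ball (0 : E d) 1) with hκ
  have hκ0 : κ ≠ 0 := (Metric.measure_ball_pos volume _ one_pos).ne'
  have hκT : κ ≠ ⊤ := (measure_ball_lt_top).ne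
  set c : ℝ≥0∞ := κ ^ (1/q) with hcdef
  have hc0 : c ≠ 0 := by
    simp only [hcdef, ne_eq, ENNReal.rpow_eq_zero_iff, not_or]
    push_neg
    exact ⟨fun h => absurd h hκ0, fun h => absurd h hκT⟩
  have hcT : c ≠ ⊤ := by
    simp only [hcdef, ne_eq, ENNReal.rpow_eq_top_iff, not_or]
    push_neg
    exact ⟨fun h => absurd h hκ0, fun h => absurd h hκT⟩
  set K : ℝ≥0∞ := 2 * c ^ θ1 with hKdef
  have hK0 : K ≠ 0 := by
    refine mul_ne_zero (by norm_num) ?_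
    simp only [ne_eq, ENNReal.rpow_eq_zero_iff, not_or]
    push_neg
    exact ⟨fun h => absurd h hc0, fun h => absurd h hcT⟩
  have hKT : K ≠ ⊤ := by
    refine ENNReal.mul_ne_top (by norm_num) ?_
    simp only [ne_eq, ENNReal.rpow_eq_top_iff, not_or]
    push_neg
    exact ⟨fun h => absurd h hc0, fun h => absurd h hcT⟩
  refine ⟨K.toReal, ENNReal.toReal_pos hK0 hKT, ?_⟩
  intro α hα _hmem _hMk
  have hofK : ENNReal.ofReal K.toReal = K := ENNReal.ofReal_toReal hKT
  set Ifun : E d → ℝ≥0∞ := fun x => ∫⁻ v : E d, ENNReal.ofReal (‖α (x, v)‖ ^ (2*p))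
    with hIfun
  set Bfun : E d → ℝ≥0∞ := fun x => ∫⁻ v : E d, ENNReal.ofReal (‖v‖ ^ k * ‖α (x, v)‖ ^ 2)
    with hBfun
  set Afun : E d → ℝ≥0∞ := fun x => ∫⁻ v : E d, ENNReal.ofReal (‖v‖ ^ l * ‖α (x, v)‖ ^ 2)
    with hAfun
  have hmeasprodI : Measurable fun z : E d × E d => ENNReal.ofReal (‖α z‖ ^ (2*p)) := by
    fun_prop
  have hmeasprodB : Measurable fun z : E d × E d =>
      ENNReal.ofReal (‖z.2‖ ^ k * ‖α z‖ ^ 2) := by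
    fun_prop
  have hmeasI : Measurable Ifun := hmeasprodI.lintegral_prod_right'
  have hmeasB : Measurable Bfun := hmeasprodB.lintegral_prod_right'
  -- pointwise bound from the `pointwise` lemma
  have hpt : ∀ x : E d, Afun x ≤ K * (Ifun x) ^ (θ1/p) * (Bfun x) ^ θ2 := by
    intro x
    have h := pointwise hd hp hqdef hl hlk (fun v => α (x, v))
      (hα.comp measurable_prodMk_left)
    calc Afun x ≤ 2 * (c * (Ifun x) ^ (1/p)) ^ θ1 * (Bfun x) ^ θ2 := h
      _ = K * (Ifun x) ^ (θ1/p) * (Bfun x) ^ θ2 := by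
          rw [ENNReal.mul_rpow_of_nonneg _ _ hθ1.le, hKdef,
            ← ENNReal.rpow_mul (Ifun x) (1/p) θ1, show 1/p*θ1 = θ1/p by ring, hcdef]
          ring
  -- integrate, use Hölder in x
  have hstep : (∫⁻ x : E d, (Afun x) ^ r) ≤
      K ^ r * (∫⁻ x : E d, Ifun x) ^ (θ1 * r / p) * (∫⁻ x : E d, Bfun x) ^ (θ2 * r) := by
    have h1 : (∫⁻ x : E d, (Afun x) ^ r) ≤
        ∫⁻ x : E d, K ^ r * ((Ifun x) ^ (θ1 * r / p) * (Bfun x) ^ (θ2 * r)) := by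
      refine lintegral_mono fun x => ?_
      calc (Afun x) ^ r ≤ (K * (Ifun x) ^ (θ1/p) * (Bfun x) ^ θ2) ^ r :=
            ENNReal.rpow_le_rpow (hpt x) hr0.le
        _ = K ^ r * ((Ifun x) ^ (θ1 * r / p) * (Bfun x) ^ (θ2 * r)) := by
            rw [ENNReal.mul_rpow_of_nonneg _ _ hr0.le,
              ENNReal.mul_rpow_of_nonneg _ _ hr0.le, ← ENNReal.rpow_mul,
              ← ENNReal.rpow_mul, mul_assoc,
              show θ1/p * r = θ1 * r / p by ring]
    have h2 : (∫⁻ x : E d, K ^ r * ((Ifun x) ^ (θ1 * r / p) * (Bfun x) ^ (θ2 * r)))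
        = K ^ r * ∫⁻ x : E d, (Ifun x) ^ (θ1 * r / p) * (Bfun x) ^ (θ2 * r) :=
      lintegral_const_mul' _ _ (by
        simp only [ne_eq, ENNReal.rpow_eq_top_iff, not_or]
        push_neg
        exact ⟨fun h => absurd h hK0, fun h => absurd h hKT⟩)
    have e1 : θ1 * r / p * P = 1 := by
      rw [hθ1r, hPdef]
      field_simp
    have e2 : θ2 * r * Q = 1 := by
      rw [hθ2r, hQdef]
      field_simp
    have e3 : (1:ℝ)/P = θ1 * r / p := by
      rw [hθ1r, hPdef, one_div_div, div_div, mul_comm D p]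
    have e4 : (1:ℝ)/Q = θ2 * r := by
      rw [hθ2r, hQdef, one_div_div]
    have h3 : (∫⁻ x : E d, (Ifun x) ^ (θ1 * r / p) * (Bfun x) ^ (θ2 * r)) ≤
        (∫⁻ x : E d, Ifun x) ^ (θ1 * r / p) * (∫⁻ x : E d, Bfun x) ^ (θ2 * r) := by
      have hH := ENNReal.lintegral_mul_le_Lp_mul_Lq (volume : Measure (E d)) hPQ
        (f := fun x => (Ifun x) ^ (θ1 * r / p)) (g := fun x => (Bfun x) ^ (θ2 * r))
        (hmeasI.pow_const _).aemeasurable (hmeasB.pow_const _).aemeasurable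
      calc (∫⁻ x : E d, (Ifun x) ^ (θ1 * r / p) * (Bfun x) ^ (θ2 * r))
          ≤ (∫⁻ x : E d, ((Ifun x) ^ (θ1 * r / p)) ^ P) ^ (1/P) *
            (∫⁻ x : E d, ((Bfun x) ^ (θ2 * r)) ^ Q) ^ (1/Q) := hH
        _ = (∫⁻ x : E d, Ifun x) ^ (θ1 * r / p) * (∫⁻ x : E d, Bfun x) ^ (θ2 * r) := by
            have hi : ∀ x : E d, ((Ifun x) ^ (θ1 * r / p)) ^ P = Ifun x := fun x => by
              rw [← ENNReal.rpow_mul, e1, ENNReal.rpow_one]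
            have hbx : ∀ x : E d, ((Bfun x) ^ (θ2 * r)) ^ Q = Bfun x := fun x => by
              rw [← ENNReal.rpow_mul, e2, ENNReal.rpow_one]
            simp_rw [hi, hbx, e3, e4]
    calc (∫⁻ x : E d, (Afun x) ^ r) ≤
        ∫⁻ x : E d, K ^ r * ((Ifun x) ^ (θ1 * r / p) * (Bfun x) ^ (θ2 * r)) := h1
      _ = K ^ r * ∫⁻ x : E d, (Ifun x) ^ (θ1 * r / p) * (Bfun x) ^ (θ2 * r) := h2
      _ ≤ K ^ r * ((∫⁻ x : E d, Ifun x) ^ (θ1 * r / p) * (∫⁻ x : E d, Bfun x) ^ (θ2 * r)) :=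
          mul_le_mul_right h3 _
      _ = K ^ r * (∫⁻ x : E d, Ifun x) ^ (θ1 * r / p) * (∫⁻ x : E d, Bfun x) ^ (θ2 * r) := by
          ring
  -- Fubini
  have hFub1 : (∫⁻ z : E d × E d, ENNReal.ofReal (‖α z‖ ^ (2*p))) = ∫⁻ x : E d, Ifun x := by
    rw [MeasureTheory.Measure.volume_eq_prod, lintegral_prod _ hmeasprodI.aemeasurable]
  have hFub2 : (∫⁻ z : E d × E d, ENNReal.ofReal (‖z.2‖ ^ k * ‖α z‖ ^ 2))
      = ∫⁻ x : E d, Bfun x := by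
    rw [MeasureTheory.Measure.volume_eq_prod, lintegral_prod _ hmeasprodB.aemeasurable]
  -- eLpNorm identification
  have h2p0 : (0:ℝ) < 2 * p := by linarith
  have hsn : eLpNorm α (ENNReal.ofReal (2*p)) volume
      = (∫⁻ z : E d × E d, ENNReal.ofReal (‖α z‖ ^ (2*p))) ^ (1/(2*p)) := by
    rw [eLpNorm_eq_lintegral_rpow_enorm_toReal (by simp [h2p0, hp0]) ENNReal.ofReal_ne_top,
      ENNReal.toReal_ofReal h2p0.le]
    congr 1
    exact lintegral_congr fun z => by
      rw [← ofReal_norm_eq_enorm,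
        ENNReal.ofReal_rpow_of_nonneg (norm_nonneg _) h2p0.le]
  -- final exponent identities
  have hden : (0:ℝ) < p * k + (p-1) * d := by nlinarith
  have hpab : p * (a + b) = p * k + (p-1) * d := by
    rw [hNab]; field_simp
  have hexp1 : θ1/p = 1/(2*p) * (2 * p * (k - l) / (p * k + (p - 1) * d)) := by
    rw [hθ1def, div_div, mul_comm (a+b) p, hpab]
    simp only [hbb]
    field_simp
  have hexp2 : θ2 = (l * p + d * (p - 1)) / (p * k + (p - 1) * d) := by
    rw [hθ2def, div_eq_div_iff hab.ne' hden.ne', ← hpab]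
    linear_combination (a+b) * hpa
  calc (∫⁻ x : E d, (∫⁻ v : E d, ENNReal.ofReal (‖v‖ ^ l * ‖α (x, v)‖ ^ 2)) ^ r) ^ (1 / r)
      ≤ (K ^ r * (∫⁻ x : E d, Ifun x) ^ (θ1 * r / p) *
          (∫⁻ x : E d, Bfun x) ^ (θ2 * r)) ^ (1/r) :=
        ENNReal.rpow_le_rpow hstep (by positivity)
    _ = K * (∫⁻ x : E d, Ifun x) ^ (θ1/p) * (∫⁻ x : E d, Bfun x) ^ θ2 := by
        rw [ENNReal.mul_rpow_of_nonneg _ _ (by positivity : (0:ℝ) ≤ 1/r),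
          ENNReal.mul_rpow_of_nonneg _ _ (by positivity : (0:ℝ) ≤ 1/r),
          ← ENNReal.rpow_mul, ← ENNReal.rpow_mul, ← ENNReal.rpow_mul,
          show r * (1/r) = 1 by field_simp, ENNReal.rpow_one,
          show θ1 * r / p * (1/r) = θ1/p by field_simp,
          show θ2 * r * (1/r) = θ2 by field_simp]
    _ = ENNReal.ofReal K.toReal *
          eLpNorm α (ENNReal.ofReal (2*p)) volume ^
            (2 * p * (k - l) / (p * k + (p - 1) * d)) *
          (∫⁻ z : E d × E d, ENNReal.ofReal (‖z.2‖ ^ k * ‖α z‖ ^ 2)) ^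
            ((l * p + d * (p - 1)) / (p * k + (p - 1) * d)) := by
        rw [hofK, hsn, hFub1, hFub2, ← ENNReal.rpow_mul, ← hexp1, ← hexp2]
end

section
/- Let d ≥ 1, κ ≥ 2d, and let α : ℝ^{2d} → ℂ be continuously differentiable with ‖α‖_{A^{κ,2}} < ∞ and ‖∇α‖_{A^{κ,2}} < ∞ (norms on ℝ^{2d}). Then the density ρ(x) := ∫_{ℝ^d} |α(x,v)|² dv is well-defined for every x, ρ ∈ L¹(ℝ^d) ∩ L^∞(ℝ^d), ρ is continuously differentiable with ∇ρ(x) = 2 Re ∫_{ℝ^d} conj(α)(x,v) ∇_x α(x,v) dv, and ∇ρ ∈ L¹(ℝ^d); in particular ρ ∈ W^{1,1}(ℝ^d) ∩ C¹(ℝ^d). -/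
open MeasureTheory
open scoped ENNReal NNReal

/-- Each fixed-`R` integral in the `A^{κ,2}` norm is finite. -/
lemma lintegral_ball_sq_lt_top {G F : Type*} [NormedAddCommGroup G] [MeasureSpace G]
    [NormedAddCommGroup F] {κ : ℝ} {f : G → F} (h : Anorm κ 2 f < ⊤) (R : ℝ≥0) :
    (∫⁻ z, ⨆ w ∈ Metric.closedBall (0 : G) (R : ℝ),
      ENNReal.ofReal (‖f (z + w)‖ ^ (2 : ℕ))) < ⊤ := by
  have hterm : (ENNReal.ofReal (1 + (R : ℝ))) ^ (-(κ / 2)) *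
      (∫⁻ z, ⨆ w ∈ Metric.closedBall (0 : G) (R : ℝ),
        ENNReal.ofReal (‖f (z + w)‖ ^ (2 : ℝ))) ^ (1 / (2:ℝ)) ≤ Anorm κ 2 f :=
    le_iSup (fun R : ℝ≥0 => (ENNReal.ofReal (1 + (R : ℝ))) ^ (-(κ / 2)) *
      (∫⁻ z, ⨆ w ∈ Metric.closedBall (0 : G) (R : ℝ),
        ENNReal.ofReal (‖f (z + w)‖ ^ (2:ℝ))) ^ (1 / (2:ℝ))) R
  have hpow : ∀ x : ℝ, x ^ (2 : ℝ) = x ^ (2 : ℕ) := fun x => by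
    rw [show (2:ℝ) = ((2:ℕ) : ℝ) by norm_num, Real.rpow_natCast]
  simp only [hpow] at hterm
  by_contra hI
  push_neg at hI
  have hItop : (∫⁻ z, ⨆ w ∈ Metric.closedBall (0 : G) (R : ℝ),
      ENNReal.ofReal (‖f (z + w)‖ ^ (2 : ℕ))) = ⊤ := top_le_iff.mp hI
  rw [hItop] at hterm
  have hc : (0:ℝ≥0∞) < (ENNReal.ofReal (1 + (R : ℝ))) ^ (-(κ / 2)) := by
    apply ENNReal.rpow_pos _ ENNReal.ofReal_ne_top
    rw [ENNReal.ofReal_pos]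
    positivity
  rw [ENNReal.top_rpow_of_pos (by norm_num), ENNReal.mul_top hc.ne'] at hterm
  exact absurd (top_le_iff.mp hterm) (by simpa using h.ne)

lemma lintegral_sq_lt_top {G F : Type*} [NormedAddCommGroup G] [MeasureSpace G]
    [NormedAddCommGroup F] {κ : ℝ} {f : G → F} (h : Anorm κ 2 f < ⊤) :
    (∫⁻ z, ENNReal.ofReal (‖f z‖ ^ (2 : ℕ))) < ⊤ := by
  refine lt_of_le_of_lt (lintegral_mono fun z => ?_) (lintegral_ball_sq_lt_top h 1)
  have h0 : (0 : G) ∈ Metric.closedBall (0 : G) ((1:ℝ≥0) : ℝ) := by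
    simp
  calc ENNReal.ofReal (‖f z‖ ^ (2:ℕ)) = ENNReal.ofReal (‖f (z + 0)‖ ^ (2:ℕ)) := by rw [add_zero]
    _ ≤ _ := le_iSup₂ (f := fun w (_ : w ∈ Metric.closedBall (0:G) ((1:ℝ≥0):ℝ)) =>
        ENNReal.ofReal (‖f (z + w)‖ ^ (2:ℕ))) (0 : G) h0

/-- The `v`-sup function `S` is measurable (it is lower semicontinuous). -/
lemma measurable_ball_sup {d : ℕ} {F : Type*} [NormedAddCommGroup F] {f : E d × E d → F}
    (hf : Continuous f) (x₀ : E d) (r : ℝ) :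
    Measurable fun v : E d => ⨆ x ∈ Metric.closedBall x₀ r,
      ENNReal.ofReal (‖f (x, v)‖ ^ (2:ℕ)) := by
  apply LowerSemicontinuous.measurable
  apply lowerSemicontinuous_biSup
  intro x _
  exact (ENNReal.continuous_ofReal.comp
    (((hf.comp (Continuous.prodMk_right x)).norm.pow 2))).lowerSemicontinuous

lemma measurable_ball_sup' {d : ℕ} {F : Type*} [NormedAddCommGroup F] {f : E d × E d → F}
    (hf : Continuous f) (R : ℝ) :
    Measurable fun z : E d × E d => ⨆ w ∈ Metric.closedBall (0 : E d × E d) R,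
      ENNReal.ofReal (‖f (z + w)‖ ^ (2:ℕ)) := by
  apply LowerSemicontinuous.measurable
  apply lowerSemicontinuous_biSup
  intro w _
  exact (ENNReal.continuous_ofReal.comp
    (((hf.comp (continuous_add_right w)).norm.pow 2))).lowerSemicontinuous

/-- Key estimate: the integral over `v` of the sup over a spatial ball is controlled by the
`A`-integral at radius `r+1`. -/
lemma key_bound {d : ℕ} {F : Type*} [NormedAddCommGroup F] {f : E d × E d → F}
    (hf : Continuous f) (x₀ : E d) (r : ℝ) (hr : 0 ≤ r) :
    volume (Metric.closedBall (0 : E d) 1) *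
      ∫⁻ v, ⨆ x ∈ Metric.closedBall x₀ r, ENNReal.ofReal (‖f (x, v)‖ ^ (2:ℕ)) ≤
    ∫⁻ z : E d × E d, ⨆ w ∈ Metric.closedBall (0 : E d × E d) (r + 1),
      ENNReal.ofReal (‖f (z + w)‖ ^ (2:ℕ)) := by
  set R : ℝ := r + 1 with hR
  have hR1 : (1:ℝ) ≤ R := by linarith
  have hR0 : (0:ℝ) < R := by linarith
  set S : E d → ℝ≥0∞ := fun v => ⨆ x ∈ Metric.closedBall x₀ r,
    ENNReal.ofReal (‖f (x, v)‖ ^ (2:ℕ)) with hS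
  set G : E d × E d → ℝ≥0∞ := fun z => ⨆ w ∈ Metric.closedBall (0 : E d × E d) R,
    ENNReal.ofReal (‖f (z + w)‖ ^ (2:ℕ)) with hG
  have hSmeas : Measurable S := measurable_ball_sup hf x₀ r
  have hGmeas : Measurable G := measurable_ball_sup' hf R
  set VR : ℝ≥0∞ := volume (Metric.closedBall (0 : E d) R) with hVR
  have hVR0 : VR ≠ 0 := (Metric.measure_closedBall_pos volume _ hR0).ne'
  have hVRtop : VR ≠ ⊤ := measure_closedBall_lt_top.ne
  -- pointwise bound : for y close to x₀ and any w, S v ≤ G (y, w) on closedBall w R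
  have hSG : ∀ y ∈ Metric.closedBall x₀ 1, ∀ w : E d, ∀ v ∈ Metric.closedBall w R,
      S v ≤ G (y, w) := by
    intro y hy w v hv
    refine iSup₂_le fun x hx => ?_
    have hmem : (x - y, v - w) ∈ Metric.closedBall (0 : E d × E d) R := by
      rw [Metric.mem_closedBall, dist_zero_right, Prod.norm_def]
      rw [Metric.mem_closedBall] at hx hy hv
      have h1 : ‖x - y‖ ≤ R := by
        rw [← dist_eq_norm]
        calc dist x y ≤ dist x x₀ + dist x₀ y := dist_triangle x x₀ y
          _ ≤ r + 1 := add_le_add hx (by rw [dist_comm]; exact hy)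
      have h2 : ‖v - w‖ ≤ R := by
        rw [← dist_eq_norm]; exact le_trans hv le_rfl
      exact max_le h1 h2
    calc ENNReal.ofReal (‖f (x, v)‖ ^ (2:ℕ))
        = ENNReal.ofReal (‖f ((y, w) + (x - y, v - w))‖ ^ (2:ℕ)) := by
          congr 2
          simp [Prod.mk_add_mk]
      _ ≤ G (y, w) := le_iSup₂ (f := fun w' (_ : w' ∈ Metric.closedBall (0 : E d × E d) R) =>
          ENNReal.ofReal (‖f ((y, w) + w')‖ ^ (2:ℕ))) _ hmem
  -- the swap identity : ∫⁻ w, ∫⁻ v in closedBall w R, S v = (∫⁻ v, S v) * VR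
  set M : Set (E d × E d) := {q : E d × E d | dist q.2 q.1 ≤ R} with hM
  have hMmeas : MeasurableSet M :=
    measurableSet_le ((continuous_dist.comp (continuous_snd.prodMk continuous_fst)).measurable)
      measurable_const
  set ψ : E d → E d → ℝ≥0∞ := fun w v => (Metric.closedBall w R).indicator S v with hψ
  have hψunc : Function.uncurry ψ = M.indicator (fun q => S q.2) := by
    funext p
    simp only [Function.uncurry, hψ, hM, Set.indicator_apply, Metric.mem_closedBall,
      Set.mem_setOf_eq]
    by_cases h : dist p.2 p.1 ≤ R <;> simp [Set.indicator_apply, Metric.mem_closedBall, h]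
  have hψmeas : AEMeasurable (Function.uncurry ψ) ((volume : Measure (E d)).prod volume) := by
    rw [hψunc]
    exact ((hSmeas.comp measurable_snd).indicator hMmeas).aemeasurable
  have hslice : ∀ w : E d, (∫⁻ v in Metric.closedBall w R, S v) = ∫⁻ v, ψ w v := by
    intro w
    rw [hψ, lintegral_indicator measurableSet_closedBall]
  have hswap : (∫⁻ w, ∫⁻ v, ψ w v) = (∫⁻ v, S v) * VR := by
    rw [lintegral_lintegral_swap hψmeas]
    have hvv : ∀ v : E d, (∫⁻ w, ψ w v) = S v * VR := by
      intro v
      have hfun : (fun w => ψ w v) = (Metric.closedBall v R).indicator (fun _ => S v) := by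
        funext w
        classical
        show (Metric.closedBall w R).indicator S v
            = (Metric.closedBall v R).indicator (fun _ => S v) w
        rw [Set.indicator_apply, Set.indicator_apply]
        simp only [Metric.mem_closedBall]
        rw [dist_comm]
      rw [hfun, lintegral_indicator_const measurableSet_closedBall,
        Measure.addHaar_closedBall_center]
    simp only [hvv]
    rw [lintegral_mul_const _ hSmeas]
  -- for y in the unit ball, ∫⁻ v, S v ≤ ∫⁻ w, G (y, w)
  have hinner : ∀ y ∈ Metric.closedBall x₀ 1, (∫⁻ v, S v) ≤ ∫⁻ w, G (y, w) := by
    intro y hy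
    have h1 : ∀ w : E d, (∫⁻ v, ψ w v) ≤ G (y, w) * VR := by
      intro w
      rw [← hslice w]
      calc ∫⁻ v in Metric.closedBall w R, S v
          ≤ ∫⁻ _ in Metric.closedBall w R, G (y, w) :=
            setLIntegral_mono measurable_const (fun v hv => hSG y hy w v hv)
        _ = G (y, w) * volume (Metric.closedBall w R) := by
            rw [setLIntegral_const]
        _ = G (y, w) * VR := by rw [Measure.addHaar_closedBall_center]
    have h2 : (∫⁻ v, S v) * VR ≤ (∫⁻ w, G (y, w)) * VR := by
      rw [← hswap]
      calc (∫⁻ w, ∫⁻ v, ψ w v) ≤ ∫⁻ w, G (y, w) * VR := lintegral_mono h1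
        _ = (∫⁻ w, G (y, w)) * VR :=
            lintegral_mul_const _ (hGmeas.comp measurable_prodMk_left)
    exact (ENNReal.mul_le_mul_iff_left hVR0 hVRtop).mp h2
  -- integrate over y in the unit ball
  calc volume (Metric.closedBall (0 : E d) 1) * ∫⁻ v, S v
      = volume (Metric.closedBall x₀ 1) * ∫⁻ v, S v := by
        rw [Measure.addHaar_closedBall_center volume x₀]
    _ = ∫⁻ _ in Metric.closedBall x₀ 1, (∫⁻ v, S v) := by rw [setLIntegral_const, mul_comm]
    _ ≤ ∫⁻ y in Metric.closedBall x₀ 1, ∫⁻ w, G (y, w) := by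
        refine setLIntegral_mono ?_ hinner
        exact hGmeas.lintegral_prod_right'
    _ ≤ ∫⁻ y, ∫⁻ w, G (y, w) := setLIntegral_le_lintegral _ _
    _ = ∫⁻ z : E d × E d, G z := by
        rw [MeasureTheory.Measure.volume_eq_prod, lintegral_prod _ hGmeas.aemeasurable]

/-- Finiteness version of the key estimate. -/
lemma key_fin {d : ℕ} {F : Type*} [NormedAddCommGroup F] {f : E d × E d → F} {κ : ℝ}
    (hf : Continuous f) (hA : Anorm κ 2 f < ⊤) (x₀ : E d) (r : ℝ) (hr : 0 ≤ r) :
    (∫⁻ v, ⨆ x ∈ Metric.closedBall x₀ r, ENNReal.ofReal (‖f (x, v)‖ ^ (2:ℕ))) ≤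
      (volume (Metric.closedBall (0 : E d) 1))⁻¹ *
      ∫⁻ z : E d × E d, ⨆ w ∈ Metric.closedBall (0 : E d × E d) (r + 1),
        ENNReal.ofReal (‖f (z + w)‖ ^ (2:ℕ)) := by
  have h := key_bound hf x₀ r hr
  have hV0 : volume (Metric.closedBall (0 : E d) 1) ≠ 0 :=
    (Metric.measure_closedBall_pos volume _ one_pos).ne'
  have hVt : volume (Metric.closedBall (0 : E d) 1) ≠ ⊤ := measure_closedBall_lt_top.ne
  calc (∫⁻ v, ⨆ x ∈ Metric.closedBall x₀ r, ENNReal.ofReal (‖f (x, v)‖ ^ (2:ℕ)))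
      = (volume (Metric.closedBall (0 : E d) 1))⁻¹ *
        (volume (Metric.closedBall (0 : E d) 1) *
          ∫⁻ v, ⨆ x ∈ Metric.closedBall x₀ r, ENNReal.ofReal (‖f (x, v)‖ ^ (2:ℕ))) := by
        rw [← mul_assoc, ENNReal.inv_mul_cancel hV0 hVt, one_mul]
    _ ≤ _ := mul_le_mul_right h _


lemma lintegral_ball_sq_lt_top' {G F : Type*} [NormedAddCommGroup G] [MeasureSpace G]
    [NormedAddCommGroup F] {κ : ℝ} {f : G → F} (h : Anorm κ 2 f < ⊤) (R : ℝ) (hR : 0 ≤ R) :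
    (∫⁻ z, ⨆ w ∈ Metric.closedBall (0 : G) R,
      ENNReal.ofReal (‖f (z + w)‖ ^ (2 : ℕ))) < ⊤ :=
  lintegral_ball_sq_lt_top h ⟨R, hR⟩

/-- Each slice `v ↦ ‖f (x, v)‖²` is integrable. -/
lemma integrable_slice_sq {d : ℕ} {F : Type*} [NormedAddCommGroup F] {f : E d × E d → F} {κ : ℝ}
    (hf : Continuous f) (hA : Anorm κ 2 f < ⊤) (x : E d) :
    Integrable (fun v : E d => ‖f (x, v)‖ ^ 2) := by
  refine ⟨((hf.comp (Continuous.prodMk_right x)).norm.pow 2).aestronglyMeasurable, ?_⟩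
  rw [hasFiniteIntegral_iff_ofReal (Filter.Eventually.of_forall fun v => by positivity)]
  refine lt_of_le_of_lt (lintegral_mono fun v => ?_)
    (lt_of_le_of_lt (key_fin hf hA x 0 le_rfl) ?_)
  · exact le_iSup₂ (f := fun x' (_ : x' ∈ Metric.closedBall x 0) =>
      ENNReal.ofReal (‖f (x', v)‖ ^ (2:ℕ))) x (Metric.mem_closedBall_self le_rfl)
  · exact ENNReal.mul_lt_top (ENNReal.inv_lt_top.mpr
        (Metric.measure_closedBall_pos volume _ one_pos))
      (lintegral_ball_sq_lt_top' hA (0 + 1) (by norm_num))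

set_option maxHeartbeats 2000000 in
/-- Regularity of the spatial density `ρ(x) = ∫ |α(x,v)|² dv` for `α ∈ B^{1,κ,2}`:
`ρ` is well-defined everywhere, lies in `L¹ ∩ L^∞`, is continuously differentiable with
`∇ρ(x) = 2 Re ∫ conj(α)(x,v) ∇ₓα(x,v) dv`, and `∇ρ ∈ L¹`; i.e. `ρ ∈ W^{1,1} ∩ C¹`. -/
theorem statement11 (d : ℕ) (hd : 1 ≤ d) (κ : ℝ) (hκ : 2 * (d : ℝ) ≤ κ)
    (α : E d × E d → ℂ) (hα : ContDiff ℝ 1 α)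
    (h1 : Anorm κ 2 α < ⊤) (h2 : Anorm κ 2 (fderiv ℝ α) < ⊤) :
    (∀ x : E d, Integrable (fun v : E d => ‖α (x, v)‖ ^ 2)) ∧
    MemLp (fun x : E d => ∫ v : E d, ‖α (x, v)‖ ^ 2) 1 volume ∧
    MemLp (fun x : E d => ∫ v : E d, ‖α (x, v)‖ ^ 2) ⊤ volume ∧
    ∃ ρ' : E d → (E d →L[ℝ] ℝ), Continuous ρ' ∧
      (∀ x : E d, HasFDerivAt (fun x' : E d => ∫ v : E d, ‖α (x', v)‖ ^ 2) (ρ' x) x) ∧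
      (∀ (x : E d) (h : E d), ρ' x h =
        2 * (∫ v : E d, (starRingEnd ℂ) (α (x, v)) *
          fderiv ℝ (fun y : E d => α (y, v)) x h).re) ∧
      Integrable (fun x : E d => ‖ρ' x‖) := by
  classical
  have hαc : Continuous α := hα.continuous
  have hDc : Continuous (fderiv ℝ α) := hα.continuous_fderiv one_ne_zero
  have hα1 : Differentiable ℝ α := hα.differentiable one_ne_zero
  -- the partial derivative in `x`
  set ι : E d →L[ℝ] E d × E d := ContinuousLinearMap.inl ℝ (E d) (E d) with hι
  set D : E d → E d → (E d →L[ℝ] ℂ) := fun x v => (fderiv ℝ α (x, v)).comp ι with hDdef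
  have hD : ∀ (x v : E d), HasFDerivAt (fun y => α (y, v)) (D x v) x := fun x v =>
    ((hα1 (x, v)).hasFDerivAt).comp x (hasFDerivAt_prodMk_left x v)
  have hιnorm : ‖ι‖ ≤ 1 := by
    refine ContinuousLinearMap.opNorm_le_bound _ zero_le_one fun x => ?_
    simp [hι, Prod.norm_def]
  have hDnorm : ∀ x v, ‖D x v‖ ≤ ‖fderiv ℝ α (x, v)‖ := fun x v => by
    calc ‖D x v‖ ≤ ‖fderiv ℝ α (x, v)‖ * ‖ι‖ := ContinuousLinearMap.opNorm_comp_le _ _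
      _ ≤ ‖fderiv ℝ α (x, v)‖ * 1 := by gcongr
      _ = _ := mul_one _
  have hDcont : Continuous fun p : E d × E d => D p.1 p.2 := hDc.clm_comp continuous_const
  set F' : E d → E d → (E d →L[ℝ] ℝ) :=
    fun x v => 2 • ((innerSL ℝ (α (x, v))).comp (D x v)) with hF'def
  have hF'deriv : ∀ (x v : E d), HasFDerivAt (fun x' => ‖α (x', v)‖ ^ 2) (F' x v) x :=
    fun x v => (hD x v).norm_sq
  have hF'cont : Continuous fun p : E d × E d => F' p.1 p.2 := by
    apply Continuous.const_smul
    exact Continuous.clm_comp ((innerSL ℝ).continuous.comp hαc) hDcont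
  have hF'norm : ∀ x v, ‖F' x v‖ ≤ ‖α (x, v)‖ ^ 2 + ‖fderiv ℝ α (x, v)‖ ^ 2 := by
    intro x v
    have hT : ‖(innerSL ℝ (α (x, v))).comp (D x v)‖ ≤ ‖α (x, v)‖ * ‖fderiv ℝ α (x, v)‖ := by
      calc ‖(innerSL ℝ (α (x, v))).comp (D x v)‖
          ≤ ‖innerSL ℝ (α (x, v))‖ * ‖D x v‖ := ContinuousLinearMap.opNorm_comp_le _ _
        _ = ‖α (x, v)‖ * ‖D x v‖ := by rw [innerSL_apply_norm]
        _ ≤ ‖α (x, v)‖ * ‖fderiv ℝ α (x, v)‖ := by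
            exact mul_le_mul_of_nonneg_left (hDnorm x v) (norm_nonneg _)
    have h2T : ‖F' x v‖ ≤ 2 * ‖(innerSL ℝ (α (x, v))).comp (D x v)‖ := by
      rw [hF'def]
      calc ‖(2:ℕ) • ((innerSL ℝ (α (x, v))).comp (D x v))‖
          = ‖((innerSL ℝ (α (x, v))).comp (D x v)) + ((innerSL ℝ (α (x, v))).comp (D x v))‖ := by
            rw [two_smul]
        _ ≤ _ := by rw [two_mul]; exact norm_add_le _ _
    nlinarith [norm_nonneg (α (x, v)), norm_nonneg (fderiv ℝ α (x, v)),
      sq_nonneg (‖α (x, v)‖ - ‖fderiv ℝ α (x, v)‖), norm_nonneg ((innerSL ℝ (α (x, v))).comp (D x v))]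
  -- integrability of the slices
  have hsliceα : ∀ x, Integrable (fun v : E d => ‖α (x, v)‖ ^ 2) :=
    integrable_slice_sq hαc h1
  have hsliceD : ∀ x, Integrable (fun v : E d => ‖fderiv ℝ α (x, v)‖ ^ 2) :=
    integrable_slice_sq hDc h2
  have hF'int : ∀ x, Integrable (fun v => F' x v) := by
    intro x
    refine ((hsliceα x).add (hsliceD x)).mono'
      ((hF'cont.comp (Continuous.prodMk_right x)).aestronglyMeasurable) ?_
    exact Filter.Eventually.of_forall fun v => hF'norm x v
  -- the local dominated bound around any point
  have hmain : ∀ x₀ : E d,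
      HasFDerivAt (fun x' : E d => ∫ v : E d, ‖α (x', v)‖ ^ 2) (∫ v, F' x₀ v) x₀ ∧
      ContinuousAt (fun x => ∫ v, F' x v) x₀ := by
    intro x₀
    set Sa : E d → ℝ≥0∞ := fun v => ⨆ x ∈ Metric.closedBall x₀ 1,
      ENNReal.ofReal (‖α (x, v)‖ ^ (2:ℕ)) with hSa
    set Sd : E d → ℝ≥0∞ := fun v => ⨆ x ∈ Metric.closedBall x₀ 1,
      ENNReal.ofReal (‖fderiv ℝ α (x, v)‖ ^ (2:ℕ)) with hSd
    have hSam : Measurable Sa := measurable_ball_sup hαc x₀ 1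
    have hSdm : Measurable Sd := measurable_ball_sup hDc x₀ 1
    have hSaint : (∫⁻ v, Sa v) < ⊤ :=
      lt_of_le_of_lt (key_fin hαc h1 x₀ 1 one_pos.le)
        (ENNReal.mul_lt_top (ENNReal.inv_lt_top.mpr
            (Metric.measure_closedBall_pos volume _ one_pos))
          (lintegral_ball_sq_lt_top' h1 (1 + 1) (by norm_num)))
    have hSdint : (∫⁻ v, Sd v) < ⊤ :=
      lt_of_le_of_lt (key_fin hDc h2 x₀ 1 one_pos.le)
        (ENNReal.mul_lt_top (ENNReal.inv_lt_top.mpr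
            (Metric.measure_closedBall_pos volume _ one_pos))
          (lintegral_ball_sq_lt_top' h2 (1 + 1) (by norm_num)))
    set bound : E d → ℝ := fun v => (Sa v).toReal + (Sd v).toReal with hbound
    have hboundint : Integrable bound := by
      refine ⟨(hSam.ennreal_toReal.add hSdm.ennreal_toReal).aestronglyMeasurable, ?_⟩
      rw [hasFiniteIntegral_iff_ofReal (Filter.Eventually.of_forall fun v => by positivity)]
      calc ∫⁻ v, ENNReal.ofReal (bound v)
          ≤ ∫⁻ v, (Sa v + Sd v) := by
            refine lintegral_mono fun v => ?_
            rw [hbound]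
            calc ENNReal.ofReal ((Sa v).toReal + (Sd v).toReal)
                = ENNReal.ofReal (Sa v).toReal + ENNReal.ofReal (Sd v).toReal :=
                  ENNReal.ofReal_add ENNReal.toReal_nonneg ENNReal.toReal_nonneg
              _ ≤ Sa v + Sd v := add_le_add ENNReal.ofReal_toReal_le ENNReal.ofReal_toReal_le
        _ = (∫⁻ v, Sa v) + ∫⁻ v, Sd v := lintegral_add_left hSam _
        _ < ⊤ := ENNReal.add_lt_top.mpr ⟨hSaint, hSdint⟩
    have hbdd : ∀ᵐ v : E d ∂volume, ∀ x ∈ Metric.ball x₀ 1, ‖F' x v‖ ≤ bound v := by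
      filter_upwards [ae_lt_top hSam hSaint.ne, ae_lt_top hSdm hSdint.ne] with v hva hvd
      intro x hx
      have hxb : x ∈ Metric.closedBall x₀ 1 := Metric.ball_subset_closedBall hx
      have h1' : ‖α (x, v)‖ ^ 2 ≤ (Sa v).toReal := by
        rw [← ENNReal.toReal_ofReal (show (0:ℝ) ≤ ‖α (x, v)‖ ^ 2 by positivity)]
        refine ENNReal.toReal_mono hva.ne ?_
        exact le_iSup₂ (f := fun x' (_ : x' ∈ Metric.closedBall x₀ 1) =>
          ENNReal.ofReal (‖α (x', v)‖ ^ (2:ℕ))) x hxb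
      have h2' : ‖fderiv ℝ α (x, v)‖ ^ 2 ≤ (Sd v).toReal := by
        rw [← ENNReal.toReal_ofReal (show (0:ℝ) ≤ ‖fderiv ℝ α (x, v)‖ ^ 2 by positivity)]
        refine ENNReal.toReal_mono hvd.ne ?_
        exact le_iSup₂ (f := fun x' (_ : x' ∈ Metric.closedBall x₀ 1) =>
          ENNReal.ofReal (‖fderiv ℝ α (x', v)‖ ^ (2:ℕ))) x hxb
      exact (hF'norm x v).trans (add_le_add h1' h2')
    constructor
    · refine hasFDerivAt_integral_of_dominated_of_fderiv_le (Metric.ball_mem_nhds x₀ one_pos)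
        (Filter.Eventually.of_forall fun x =>
          ((hαc.comp (Continuous.prodMk_right x)).norm.pow 2).aestronglyMeasurable)
        (hsliceα x₀)
        ((hF'cont.comp (Continuous.prodMk_right x₀)).aestronglyMeasurable)
        hbdd hboundint
        (Filter.Eventually.of_forall fun v x _ => hF'deriv x v)
    · refine continuousAt_of_dominated ?_ ?_ hboundint ?_
      · exact Filter.Eventually.of_forall fun x =>
          ((hF'cont.comp (Continuous.prodMk_right x)).aestronglyMeasurable)
      · filter_upwards [Metric.ball_mem_nhds x₀ one_pos] with x hx
        exact hbdd.mono fun v hv => hv x hx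
      · exact Filter.Eventually.of_forall fun v =>
          (hF'cont.comp (continuous_id.prodMk continuous_const)).continuousAt
  have hρcont : Continuous (fun x : E d => ∫ v : E d, ‖α (x, v)‖ ^ 2) :=
    continuous_iff_continuousAt.mpr fun x => (hmain x).1.continuousAt
  -- Tonelli helper
  have tonelli : ∀ (g : E d × E d → ℝ≥0∞), Measurable g →
      (∫⁻ x, ∫⁻ v, g (x, v)) = ∫⁻ z : E d × E d, g z := by
    intro g hg
    rw [MeasureTheory.Measure.volume_eq_prod, lintegral_prod _ hg.aemeasurable]
  have hαsqm : Measurable fun z : E d × E d => ENNReal.ofReal (‖α z‖ ^ (2:ℕ)) :=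
    (ENNReal.continuous_ofReal.comp (hαc.norm.pow 2)).measurable
  have hDsqm : Measurable fun z : E d × E d => ENNReal.ofReal (‖fderiv ℝ α z‖ ^ (2:ℕ)) :=
    (ENNReal.continuous_ofReal.comp (hDc.norm.pow 2)).measurable
  refine ⟨hsliceα, ?_, ?_, fun x => ∫ v, F' x v, ?_, fun x => (hmain x).1, ?_, ?_⟩
  · -- L¹
    rw [memLp_one_iff_integrable]
    refine ⟨hρcont.aestronglyMeasurable, ?_⟩
    rw [hasFiniteIntegral_iff_ofReal (Filter.Eventually.of_forall fun x =>
      integral_nonneg fun v => by positivity)]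
    have hpt : ∀ x : E d, ENNReal.ofReal (∫ v : E d, ‖α (x, v)‖ ^ 2) =
        ∫⁻ v, ENNReal.ofReal (‖α (x, v)‖ ^ (2:ℕ)) := fun x =>
      MeasureTheory.ofReal_integral_eq_lintegral_ofReal (hsliceα x)
        (Filter.Eventually.of_forall fun v => by positivity)
    calc ∫⁻ x, ENNReal.ofReal (∫ v : E d, ‖α (x, v)‖ ^ 2)
        = ∫⁻ x, ∫⁻ v, ENNReal.ofReal (‖α (x, v)‖ ^ (2:ℕ)) := by simp only [hpt]
      _ = ∫⁻ z : E d × E d, ENNReal.ofReal (‖α z‖ ^ (2:ℕ)) := tonelli _ hαsqm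
      _ < ⊤ := lintegral_sq_lt_top h1
  · -- L^∞
    set Ce : ℝ≥0∞ := (volume (Metric.closedBall (0 : E d) 1))⁻¹ *
      ∫⁻ z : E d × E d, ⨆ w ∈ Metric.closedBall (0 : E d × E d) ((0:ℝ) + 1),
        ENNReal.ofReal (‖α (z + w)‖ ^ (2:ℕ)) with hCe
    have hCetop : Ce ≠ ⊤ := by
      rw [hCe]
      exact (ENNReal.mul_lt_top (ENNReal.inv_lt_top.mpr
          (Metric.measure_closedBall_pos volume _ one_pos))
        (lintegral_ball_sq_lt_top' h1 ((0:ℝ) + 1) (by norm_num))).ne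
    refine memLp_top_of_bound hρcont.aestronglyMeasurable Ce.toReal
      (Filter.Eventually.of_forall fun x => ?_)
    have hnn : (0:ℝ) ≤ ∫ v : E d, ‖α (x, v)‖ ^ 2 := integral_nonneg fun v => by positivity
    rw [Real.norm_of_nonneg hnn]
    have hpt : ENNReal.ofReal (∫ v : E d, ‖α (x, v)‖ ^ 2) =
        ∫⁻ v, ENNReal.ofReal (‖α (x, v)‖ ^ (2:ℕ)) :=
      MeasureTheory.ofReal_integral_eq_lintegral_ofReal (hsliceα x)
        (Filter.Eventually.of_forall fun v => by positivity)
    have hle : ENNReal.ofReal (∫ v : E d, ‖α (x, v)‖ ^ 2) ≤ Ce := by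
      rw [hpt]
      refine le_trans (lintegral_mono fun v => ?_) (key_fin hαc h1 x 0 le_rfl)
      exact le_iSup₂ (f := fun x' (_ : x' ∈ Metric.closedBall x 0) =>
        ENNReal.ofReal (‖α (x', v)‖ ^ (2:ℕ))) x (Metric.mem_closedBall_self le_rfl)
    calc (∫ v : E d, ‖α (x, v)‖ ^ 2)
        = (ENNReal.ofReal (∫ v : E d, ‖α (x, v)‖ ^ 2)).toReal := by
          rw [ENNReal.toReal_ofReal hnn]
      _ ≤ Ce.toReal := ENNReal.toReal_mono hCetop hle
  · -- continuity of ρ'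
    exact continuous_iff_continuousAt.mpr fun x => (hmain x).2
  · -- the formula
    intro x h
    have hfd : ∀ v : E d, fderiv ℝ (fun y : E d => α (y, v)) x = D x v := fun v => (hD x v).fderiv
    have hint : Integrable (fun v : E d => (starRingEnd ℂ) (α (x, v)) * (D x v) h) := by
      refine (((hsliceα x).add (hsliceD x)).mul_const ‖h‖).mono' ?_ ?_
      · apply Continuous.aestronglyMeasurable
        exact ((Complex.continuous_conj.comp (hαc.comp (Continuous.prodMk_right x))).mul
          (((hDcont.comp (Continuous.prodMk_right x))).clm_apply continuous_const))
      · refine Filter.Eventually.of_forall fun v => ?_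
        have hb : ‖(D x v) h‖ ≤ ‖D x v‖ * ‖h‖ := ContinuousLinearMap.le_opNorm _ _
        have hDb : ‖D x v‖ ≤ ‖fderiv ℝ α (x, v)‖ := hDnorm x v
        calc ‖(starRingEnd ℂ) (α (x, v)) * (D x v) h‖
            = ‖α (x, v)‖ * ‖(D x v) h‖ := by rw [norm_mul, RingHomIsometric.norm_map]
          _ ≤ ‖α (x, v)‖ * (‖fderiv ℝ α (x, v)‖ * ‖h‖) := by
              refine mul_le_mul_of_nonneg_left (hb.trans ?_) (norm_nonneg _)
              exact mul_le_mul_of_nonneg_right hDb (norm_nonneg _)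
          _ ≤ (‖α (x, v)‖ ^ 2 + ‖fderiv ℝ α (x, v)‖ ^ 2) * ‖h‖ := by
              nlinarith [norm_nonneg (α (x, v)), norm_nonneg (fderiv ℝ α (x, v)),
                norm_nonneg h, sq_nonneg (‖α (x, v)‖ - ‖fderiv ℝ α (x, v)‖)]
    have happly : ∀ v : E d, (F' x v) h =
        2 * ((starRingEnd ℂ) (α (x, v)) * (D x v) h).re := by
      intro v
      have : (F' x v) h = ((innerSL ℝ (α (x, v))).comp (D x v)) h +
          ((innerSL ℝ (α (x, v))).comp (D x v)) h := by
        rw [hF'def]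
        show ((2:ℕ) • ((innerSL ℝ (α (x, v))).comp (D x v))) h = _
        rw [two_smul, ContinuousLinearMap.add_apply]
      rw [this]
      have hval : ((innerSL ℝ (α (x, v))).comp (D x v)) h =
          ((starRingEnd ℂ) (α (x, v)) * (D x v) h).re := by
        rw [ContinuousLinearMap.comp_apply, innerSL_apply_apply]
        rw [Complex.inner, mul_comm]
      rw [hval]; ring
    simp only [hfd]
    rw [ContinuousLinearMap.integral_apply (hF'int x) h]
    calc ∫ v : E d, (F' x v) h
        = ∫ v : E d, 2 * ((starRingEnd ℂ) (α (x, v)) * (D x v) h).re := by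
          simp only [happly]
      _ = 2 * ∫ v : E d, ((starRingEnd ℂ) (α (x, v)) * (D x v) h).re :=
          integral_const_mul 2 _
      _ = 2 * (∫ v : E d, (starRingEnd ℂ) (α (x, v)) * (D x v) h).re := by
          rw [← RCLike.re_to_complex (x := ∫ v : E d, (starRingEnd ℂ) (α (x, v)) * (D x v) h),
            ← integral_re hint]
          simp only [RCLike.re_to_complex]
  · -- integrability of ‖ρ'‖
    have hρ'cont : Continuous fun x : E d => ∫ v, F' x v :=
      continuous_iff_continuousAt.mpr fun x => (hmain x).2
    refine ⟨hρ'cont.norm.aestronglyMeasurable, ?_⟩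
    show (∫⁻ x : E d, ‖‖∫ v, F' x v‖‖₊) < ⊤
    calc ∫⁻ x : E d, (‖‖∫ v, F' x v‖‖₊ : ℝ≥0∞)
        = ∫⁻ x : E d, (‖∫ v, F' x v‖₊ : ℝ≥0∞) := by simp only [nnnorm_norm]
      _ ≤ ∫⁻ x : E d, ∫⁻ v, (‖F' x v‖₊ : ℝ≥0∞) :=
          lintegral_mono fun x => MeasureTheory.enorm_integral_le_lintegral_enorm _
      _ ≤ ∫⁻ x : E d, ∫⁻ v, (ENNReal.ofReal (‖α (x, v)‖ ^ (2:ℕ)) +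
            ENNReal.ofReal (‖fderiv ℝ α (x, v)‖ ^ (2:ℕ))) := by
          refine lintegral_mono fun x => lintegral_mono fun v => ?_
          calc (‖F' x v‖₊ : ℝ≥0∞) = ENNReal.ofReal ‖F' x v‖ :=
                (ofReal_norm _).symm
            _ ≤ ENNReal.ofReal (‖α (x, v)‖ ^ 2 + ‖fderiv ℝ α (x, v)‖ ^ 2) :=
                ENNReal.ofReal_le_ofReal (hF'norm x v)
            _ = _ := ENNReal.ofReal_add (by positivity) (by positivity)
      _ = ∫⁻ z : E d × E d, (ENNReal.ofReal (‖α z‖ ^ (2:ℕ)) +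
            ENNReal.ofReal (‖fderiv ℝ α z‖ ^ (2:ℕ))) := tonelli _ (hαsqm.add hDsqm)
      _ = (∫⁻ z : E d × E d, ENNReal.ofReal (‖α z‖ ^ (2:ℕ))) +
            ∫⁻ z : E d × E d, ENNReal.ofReal (‖fderiv ℝ α z‖ ^ (2:ℕ)) :=
          lintegral_add_left hαsqm _
      _ < ⊤ := ENNReal.add_lt_top.mpr ⟨lintegral_sq_lt_top h1, lintegral_sq_lt_top h2⟩
end
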